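/- arXiv:1101.3962 — 3 statements merged into one kernel-verified Lean document; each statement's English description precedes it below -/
import Mathlib

section
/- For any left Â-module E, the subset T̂_a(E) := { x ∈ E : ℂ[[b]]·x ⊂ T_a(E) } is a sub-Â-module of E, and it is the largest sub-Â-module of E contained in T_a(E). -/
/- Axiomatized framework for Barlet's algebra `Â` and its (a,b)-modules. -/

open PowerSeries

noncomputable section

universe u v

/-- The algebra `Â` of formal series `Σ_ν P_ν(a)·b^ν` with `P_ν ∈ ℂ[[a]]`:
a `ℂ`-algebra with two distinguished elements `a`, `b` satisfying
`a·b − b·a = b²`, containing copies of `ℂ[[a]]` and `ℂ[[b]]`, in which every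
element has a unique expansion `Σ_ν P_ν(a)·b^ν` (expressed via truncations). -/
class AHatAlgebra (A : Type u) [Ring A] [Algebra ℂ A] where
  a : A
  b : A
  comm_ab : a * b - b * a = b ^ 2
  embA : PowerSeries ℂ →ₐ[ℂ] A
  embA_X : embA PowerSeries.X = a
  embB : PowerSeries ℂ →ₐ[ℂ] A
  embB_X : embB PowerSeries.X = b
  coeffb : A → ℕ → PowerSeries ℂ
  expand : ∀ (x : A) (N : ℕ),
      ∃ y : A, x = (∑ ν ∈ Finset.range N, embA (coeffb x ν) * b ^ ν) + y * b ^ N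
  coeffb_unique : ∀ (x : A) (N : ℕ) (P : ℕ → PowerSeries ℂ) (y : A),
      x = (∑ ν ∈ Finset.range N, embA (P ν) * b ^ ν) + y * b ^ N →
      ∀ ν < N, coeffb x ν = P ν

namespace AHat

variable (A : Type u) [Ring A] [Algebra ℂ A] [AHatAlgebra A]

/-- The element `a` of `Â`. -/
def av : A := AHatAlgebra.a
/-- The element `b` of `Â`. -/
def bv : A := AHatAlgebra.b
/-- The embedding `ℂ[[a]] → Â`, `T ↦ T(a)`. -/
def eA : PowerSeries ℂ →ₐ[ℂ] A := AHatAlgebra.embA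
/-- The embedding `ℂ[[b]] → Â`, `S ↦ S(b)`. -/
def eB : PowerSeries ℂ →ₐ[ℂ] A := AHatAlgebra.embB

/-- The `ℂ[[b]]`-module structure on an `Â`-module, via `S ↦ S(b)`. -/
def psMod (E : Type v) [AddCommGroup E] [Module A E] : Module (PowerSeries ℂ) E :=
  Module.compHom E (eB A).toRingHom

/-- The `ℂ`-module structure on an `Â`-module. -/
def cMod (E : Type v) [AddCommGroup E] [Module A E] : Module ℂ E :=
  Module.compHom E (algebraMap ℂ A)

/-- A simple pole (a,b)-module : free and finitely generated over `ℂ[[b]]`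
with `a·E ⊂ b·E`. -/
def IsSimplePole (E : Type v) [AddCommGroup E] [Module A E] : Prop :=
  (letI := psMod A E
   Module.Finite (PowerSeries ℂ) E ∧ Module.Free (PowerSeries ℂ) E) ∧
  ∀ x : E, ∃ y : E, av A • x = bv A • y

/-- A regular (a,b)-module : one contained in a simple pole (a,b)-module. -/
def IsRegular (E : Type v) [AddCommGroup E] [Module A E] : Prop :=
  ∃ (F : ModuleCat.{v} A) (i : E →ₗ[A] F), IsSimplePole A F ∧ Function.Injective i

/-- Rank over `ℂ[[b]]`. -/
def bRank (E : Type v) [AddCommGroup E] [Module A E] : ℕ :=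
  letI := psMod A E
  Module.finrank (PowerSeries ℂ) E

/-- Generated over `Â` by a single element. -/
def IsMonogenic (E : Type v) [AddCommGroup E] [Module A E] : Prop :=
  ∃ x : E, Submodule.span A {x} = ⊤

/-- `i : E → F` realizes `F` as the sharp `E^♯` of `E` : `F` has a simple pole,
`i` is injective, and every `Â`-linear map from `E` to a simple pole module
factors uniquely through `i`. -/
def IsSharpOf (E : Type v) [AddCommGroup E] [Module A E]
    (F : Type v) [AddCommGroup F] [Module A F] (i : E →ₗ[A] F) : Prop :=
  IsSimplePole A F ∧ Function.Injective i ∧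
  ∀ (G : ModuleCat.{v} A), IsSimplePole A G →
    ∀ f : E →ₗ[A] G, ∃! g : F →ₗ[A] G, g.comp i = f

/-- `B` is the Bernstein polynomial of the regular (a,b)-module `E` : the
minimal polynomial of `−b⁻¹·a` acting on `E^♯/b·E^♯`. -/
def IsBernsteinPolyOf (E : Type v) [AddCommGroup E] [Module A E]
    (B : Polynomial ℂ) : Prop :=
  ∃ (F : ModuleCat.{v} A) (i : E →ₗ[A] F), IsSharpOf A E F i ∧
    (letI := cMod A F
     ∃ W : Submodule ℂ F, (W : Set F) = {x : F | ∃ y : F, x = bv A • y} ∧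
       ∃ u : Module.End ℂ (F ⧸ W),
         (∀ x y : F, av A • x = bv A • y →
            u (Submodule.Quotient.mk x) = - Submodule.Quotient.mk y) ∧
         minpoly ℂ u = B)

/-- A fresco : a monogenic regular (a,b)-module whose Bernstein polynomial has
all its roots negative rational numbers. -/
def IsFresco (E : Type v) [AddCommGroup E] [Module A E] : Prop :=
  IsRegular A E ∧ IsMonogenic A E ∧
  ∃ B : Polynomial ℂ, IsBernsteinPolyOf A E B ∧
    ∀ z ∈ B.roots, ∃ q : ℚ, 0 < q ∧ z = -(q : ℂ)

/-- A `[λ]`-primitive fresco : every root of the Bernstein polynomial lies in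
`−λ−ℕ`. -/
def IsPrimitiveFresco (l : ℚ) (E : Type v) [AddCommGroup E] [Module A E] : Prop :=
  IsFresco A E ∧
  ∃ B : Polynomial ℂ, IsBernsteinPolyOf A E B ∧
    ∀ z ∈ B.roots, ∃ n : ℕ, z = -((l : ℂ) + (n : ℂ))

/-- `F` is (a copy of) the module `Ξ_λ^(N)` of `[λ]`-primitive asymptotic
expansions : free over `ℂ[[b]]` with basis `e₀, …, e_N` satisfying
`a·e₀ = λ·b·e₀` and `a·e_j = λ·b·e_j + b·e_{j−1}`. -/
def IsXi (l : ℚ) (N : ℕ) (F : Type v) [AddCommGroup F] [Module A F] : Prop :=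
  letI := psMod A F
  ∃ e : Module.Basis (Fin (N + 1)) (PowerSeries ℂ) F,
    av A • e 0 = (algebraMap ℂ A (l : ℂ) * bv A) • e 0 ∧
    ∀ j : Fin (N + 1), 0 < (j : ℕ) →
      av A • e j = (algebraMap ℂ A (l : ℂ) * bv A) • e j +
        bv A • e ⟨(j : ℕ) - 1, lt_of_le_of_lt (Nat.sub_le _ 1) j.isLt⟩

/-- A `[λ]`-primitive theme : a `[λ]`-primitive fresco embedding in some
`Ξ_λ^(N)`. -/
def IsTheme (l : ℚ) (E : Type v) [AddCommGroup E] [Module A E] : Prop :=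
  IsPrimitiveFresco A l E ∧
  ∃ (N : ℕ) (F : ModuleCat.{v} A) (i : E →ₗ[A] F),
    IsXi A l N F ∧ Function.Injective i

/-- A semi-simple `[λ]`-primitive fresco : every `Â`-linear map to some
`Ξ_λ^(N)` has rank at most 1. -/
def IsSemiSimpleFresco (l : ℚ) (E : Type v) [AddCommGroup E] [Module A E] : Prop :=
  IsPrimitiveFresco A l E ∧
  ∀ (N : ℕ) (F : ModuleCat.{v} A), IsXi A l N F →
    ∀ f : E →ₗ[A] F,
      letI := cMod A (F : Type v)
      Module.rank ℂ (Submodule.span ℂ (Set.range f)) ≤ 1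

/-- A normal submodule : the quotient is free over `ℂ[[b]]`. -/
def IsNormal (E : Type v) [AddCommGroup E] [Module A E] (F : Submodule A E) : Prop :=
  letI := psMod A (E ⧸ F)
  Module.Free (PowerSeries ℂ) (E ⧸ F)

/-- A Jordan–Hölder sequence for `E` of length `k`, with normal terms and rank
one quotients `F_{j+1}/F_j ≅ E_{μ_j} = Â/Â·(a − μ_j·b)`. -/
def IsJHSeq (E : Type v) [AddCommGroup E] [Module A E] (k : ℕ)
    (F : ℕ → Submodule A E) (μ : ℕ → ℚ) : Prop :=
  F 0 = ⊥ ∧ F k = ⊤ ∧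
  (∀ j ≤ k, IsNormal A E (F j)) ∧
  ∀ j < k, ∃ x : E, x ∈ F (j + 1) ∧
    F (j + 1) = F j ⊔ Submodule.span A {x} ∧
    (av A - algebraMap ℂ A ((μ j : ℚ) : ℂ) * bv A) • x ∈ F j ∧
    ∀ S : PowerSeries ℂ, eB A S • x ∈ F j → S = 0

/-- The principal Jordan–Hölder sequence : the `μ_j + j` are increasing. -/
def IsPrincipalJH (E : Type v) [AddCommGroup E] [Module A E] (k : ℕ)
    (F : ℕ → Submodule A E) (μ : ℕ → ℚ) : Prop :=
  IsJHSeq A E k F μ ∧ ∀ i j : ℕ, i ≤ j → j < k → μ i + i ≤ μ j + j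

/-- `E` has fundamental invariants `μ 0, …, μ (k−1)` (the numbers attached to
its principal Jordan–Hölder sequence of length `k`). -/
def HasInvariants (E : Type v) [AddCommGroup E] [Module A E] (k : ℕ)
    (μ : ℕ → ℚ) : Prop :=
  ∃ F : ℕ → Submodule A E, IsPrincipalJH A E k F μ

/-- Dimension over `ℂ` of `Ker (a − μ·b : E → E)`. -/
def deltaKer (E : Type v) [AddCommGroup E] [Module A E] (μ : ℚ) : ℕ :=
  letI := cMod A E
  Module.finrank ℂ
    (Submodule.span ℂ {x : E | (av A - algebraMap ℂ A (μ : ℂ) * bv A) • x = 0})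

/-- The ss-depth `d(E)` : maximal rank of a normal sub-theme of `E`. -/
def HasSSDepth (l : ℚ) (E : Type v) [AddCommGroup E] [Module A E] (d : ℕ) : Prop :=
  (∃ T : Submodule A E, IsNormal A E T ∧ IsTheme A l T ∧ bRank A T = d) ∧
  ∀ T : Submodule A E, IsNormal A E T → IsTheme A l T → bRank A T ≤ d

/-- `S` is `S₁(E)`, the biggest semi-simple submodule of `E` (it is normal). -/
def IsS1 (l : ℚ) (E : Type v) [AddCommGroup E] [Module A E]
    (S : Submodule A E) : Prop :=
  IsNormal A E S ∧ IsSemiSimpleFresco A l S ∧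
  ∀ S' : Submodule A E, IsSemiSimpleFresco A l S' → S' ≤ S

/-- `S` is `Σ¹(E)`, the smallest normal submodule of `E` with semi-simple
quotient. -/
def IsSigma1 (l : ℚ) (E : Type v) [AddCommGroup E] [Module A E]
    (S : Submodule A E) : Prop :=
  IsNormal A E S ∧ IsSemiSimpleFresco A l (E ⧸ S) ∧
  ∀ S' : Submodule A E, IsNormal A E S' → IsSemiSimpleFresco A l (E ⧸ S') → S ≤ S'

/-- The module `θ_*(E)` : same underlying group, with `Â` acting through `Θ`. -/
def Twisted (_Θ : A →+* A) (E : Type v) : Type v := E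

instance Twisted.instAddCommGroup (Θ : A →+* A) (E : Type v) [AddCommGroup E] :
    AddCommGroup (Twisted A Θ E) := inferInstanceAs (AddCommGroup E)

instance Twisted.instModule (Θ : A →+* A) (E : Type v) [AddCommGroup E]
    [Module A E] : Module A (Twisted A Θ E) := Module.compHom E Θ

/-- The element `(a − λ₁·b)·(1 + z·b^p)⁻¹·(a − (λ₁+p−1)·b)` of `Â`. -/
def P2 (l₁ : ℚ) (p : ℕ) (z : ℂ) : A :=
  (av A - algebraMap ℂ A (l₁ : ℂ) * bv A) *
    eB A (1 + PowerSeries.C z * PowerSeries.X ^ p : PowerSeries ℂ)⁻¹ *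
    (av A - algebraMap ℂ A ((l₁ + p - 1 : ℚ) : ℂ) * bv A)

/-- `E` is (isomorphic to) the rank 2 theme with fundamental invariants
`(λ₁, p)` and parameter `z`, namely
`E(z) = Â/Â·(a − λ₁·b)·(1 + z·b^p)⁻¹·(a − (λ₁+p−1)·b)`. -/
def HasParam (l₁ : ℚ) (p : ℕ) (z : ℂ) (E : Type u) [AddCommGroup E]
    [Module A E] : Prop :=
  Nonempty (E ≃ₗ[A] (A ⧸ Submodule.span A {P2 A l₁ p z}))

/-- The element `(a − λ₁·b)·(1 + γ·b)⁻¹·(a − λ₂·b)·(a − λ₃·b)` of `Â`,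
where `λ₂ = λ₁ + p₁ − 1` and `λ₃ = λ₂ + p₂ − 1`. -/
def P3 (l₁ : ℚ) (p₁ p₂ : ℕ) (γ : ℂ) : A :=
  (av A - algebraMap ℂ A (l₁ : ℂ) * bv A) *
    eB A (1 + PowerSeries.C γ * PowerSeries.X : PowerSeries ℂ)⁻¹ *
    (av A - algebraMap ℂ A ((l₁ + p₁ - 1 : ℚ) : ℂ) * bv A) *
    (av A - algebraMap ℂ A ((l₁ + p₁ + p₂ - 2 : ℚ) : ℂ) * bv A)

/-- The rank 3 fresco `E(γ) = Â/Â·(a − λ₁·b)·(1 + γ·b)⁻¹·(a − λ₂·b)·(a − λ₃·b)`. -/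
def E3 (l₁ : ℚ) (p₁ p₂ : ℕ) (γ : ℂ) : Type u :=
  A ⧸ Submodule.span A {P3 A l₁ p₁ p₂ γ}

instance (l₁ : ℚ) (p₁ p₂ : ℕ) (γ : ℂ) : AddCommGroup (E3 A l₁ p₁ p₂ γ) :=
  inferInstanceAs (AddCommGroup (A ⧸ Submodule.span A {P3 A l₁ p₁ p₂ γ}))

instance (l₁ : ℚ) (p₁ p₂ : ℕ) (γ : ℂ) : Module A (E3 A l₁ p₁ p₂ γ) :=
  inferInstanceAs (Module A (A ⧸ Submodule.span A {P3 A l₁ p₁ p₂ γ}))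

end AHat

namespace S5
open AHat
set_option linter.unusedSectionVars false

/-- ascending factorial `ν (ν+1) ⋯ (ν+s-1)` -/
def ascF (ν : ℕ) : ℕ → ℕ
  | 0 => 1
  | s+1 => ascF ν s * (ν + s)

@[simp] lemma ascF_zero (ν : ℕ) : ascF ν 0 = 1 := rfl
lemma ascF_succ (ν s : ℕ) : ascF ν (s+1) = ascF ν s * (ν + s) := rfl

lemma ascF_mul_factorial (v s : ℕ) : ascF (v+1) s * v.factorial = (v+s).factorial := by
  induction s with
  | zero => simp
  | succ s ih =>
    rw [ascF_succ, mul_comm (ascF (v+1) s) (v+1+s), mul_assoc, ih]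
    have : v + (s+1) = (v+s) + 1 := by omega
    rw [this, Nat.factorial_succ]
    congr 1
    omega

/-- the staircase coefficient -/
def sc (ν m k : ℕ) : ℕ := m.choose k * ascF ν (m - k)

lemma sc_zero_zero (ν : ℕ) : sc ν 0 0 = 1 := by simp [sc]

lemma sc_zero_succ (ν k : ℕ) : sc ν 0 (k+1) = 0 := by simp [sc]

lemma sc_succ_zero (ν m : ℕ) : sc ν (m+1) 0 = sc ν m 0 * (ν + (m - 0)) := by
  simp [sc, ascF_succ]

lemma sc_succ_succ (ν m k : ℕ) :
    sc ν (m+1) (k+1) = sc ν m k + sc ν m (k+1) * (ν + (m - (k+1))) := by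
  rcases le_or_gt (k+1) m with h | h
  · have h1 : m + 1 - (k+1) = m - k := by omega
    have h2 : (m - (k+1)) + 1 = m - k := by omega
    calc sc ν (m+1) (k+1) = (m.choose k + m.choose (k+1)) * ascF ν (m - k) := by
            rw [sc, Nat.choose_succ_succ, h1]
      _ = m.choose k * ascF ν (m - k) + m.choose (k+1) * ascF ν ((m - (k+1)) + 1) := by
            rw [h2, add_mul]
      _ = sc ν m k + sc ν m (k+1) * (ν + (m - (k+1))) := by
            rw [sc, sc, ascF_succ, mul_assoc]
  · rcases Nat.lt_or_ge k m with h2 | h2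
    · -- k < m < k+1 impossible
      omega
    · -- k ≥ m : if k = m : choose (m+1) (m+1) = 1, choose m m = 1, choose m (m+1) = 0
      rcases Nat.eq_or_lt_of_le h2 with rfl | h3
      · simp [sc, Nat.choose_succ_self]
      · have : m < k := h3
        simp [sc, Nat.choose_eq_zero_of_lt (by omega : m + 1 < k + 1),
          Nat.choose_eq_zero_of_lt (by omega : m < k),
          Nat.choose_eq_zero_of_lt (by omega : m < k + 1)]


variable {A : Type u} [Ring A] [Algebra ℂ A] [AHatAlgebra A]
variable {E : Type v} [AddCommGroup E] [Module A E]

lemma ab_comm : (av A) * (bv A) = (bv A) * (av A) + (bv A)^2 := by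
  have h := AHatAlgebra.comm_ab (A := A)
  unfold av bv
  exact eq_add_of_sub_eq' h

/-- `a·b^j = b^j·a + j·b^(j+1)` -/
lemma a_mul_bpow (j : ℕ) : (av A) * (bv A)^j = (bv A)^j * (av A) + j • (bv A)^(j+1) := by
  induction j with
  | zero => simp
  | succ j ih =>
    have : (av A) * (bv A)^(j+1) = ((av A) * (bv A)^j) * (bv A) := by
      rw [mul_assoc, ← pow_succ]
    rw [this, ih, add_mul, smul_mul_assoc, mul_assoc, ab_comm, mul_add, ← pow_succ,
      ← mul_assoc, ← pow_succ]
    have hsq : (bv A)^j * (bv A)^2 = (bv A)^(j+1+1) := by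
      rw [← pow_add]
    rw [hsq]
    rw [succ_nsmul]
    abel

/-- action form: `a • (b^j • w) = b^j • (a • w) + j • (b^(j+1) • w)` -/
lemma a_smul_bpow (j : ℕ) (w : E) :
    (av A) • ((bv A)^j • w) = (bv A)^j • ((av A) • w) + j • ((bv A)^(j+1) • w) := by
  rw [← mul_smul, a_mul_bpow, add_smul, mul_smul]
  congr 1
  rw [smul_assoc]

/-- The staircase formula:
`a^m • (b^ν • x) = ∑_{k<n} sc ν m k • (b^(ν+m-k) • (a^k • x))` when `a^n • x = 0`. -/
lemma stair (x : E) (n : ℕ) (hn : (av A)^n • x = 0) (ν : ℕ) :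
    ∀ m, (av A)^m • ((bv A)^ν • x) =
      ∑ k ∈ Finset.range n, (sc ν m k) • ((bv A)^(ν+m-k) • ((av A)^k • x)) := by
  intro m
  induction m with
  | zero =>
    rcases Nat.eq_zero_or_pos n with rfl | hpos
    · have hx : x = 0 := by simpa using hn
      simp [hx]
    · rw [Finset.sum_eq_single 0]
      · simp [sc_zero_zero]
      · intro k _ hk
        obtain ⟨k', rfl⟩ := Nat.exists_eq_succ_of_ne_zero hk
        simp [sc_zero_succ]
      · intro h
        exact absurd (Finset.mem_range.mpr hpos) h
  | succ m ih =>
    have hstep : (av A)^(m+1) • ((bv A)^ν • x) = (av A) • ((av A)^m • ((bv A)^ν • x)) := by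
      rw [pow_succ', mul_smul]
    rw [hstep, ih, Finset.smul_sum]
    -- push a inside each term
    have hterm : ∀ k ∈ Finset.range n,
        (av A) • ((sc ν m k) • ((bv A)^(ν+m-k) • ((av A)^k • x))) =
        (sc ν m k) • ((bv A)^(ν+m-k) • ((av A)^(k+1) • x))
          + (sc ν m k * (ν+m-k)) • ((bv A)^((ν+m-k)+1) • ((av A)^k • x)) := by
      intro k _
      have h1 : (av A) • ((av A)^k • x) = (av A)^(k+1) • x := by
        rw [← mul_smul, ← pow_succ']
      rw [smul_comm, a_smul_bpow, h1, smul_add, mul_smul]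
    rw [Finset.sum_congr rfl hterm, Finset.sum_add_distrib]
    -- now match against the target
    -- target : ∑ k, sc ν (m+1) k • ξ(ν+m+1-k, k)
    -- first sum (shifted k+1 powers of a) and second sum (powers of b increased)
    have hsecond : ∀ k ∈ Finset.range n,
        (sc ν m k * (ν+m-k)) • ((bv A)^((ν+m-k)+1) • ((av A)^k • x)) =
        (sc ν m k * (ν + (m-k))) • ((bv A)^(ν+(m+1)-k) • ((av A)^k • x)) := by
      intro k _
      rcases le_or_gt k m with h | h
      · have h1 : (ν+m-k)+1 = ν+(m+1)-k := by omega
        have h2 : ν+m-k = ν+(m-k) := by omega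
        rw [h1, h2]
      · have : m.choose k = 0 := Nat.choose_eq_zero_of_lt h
        simp [sc, this]
    -- handle first sum via index shift
    set g : ℕ → E := fun t => if t = 0 then 0 else
      (sc ν m (t-1)) • ((bv A)^(ν+(m+1)-t) • ((av A)^t • x)) with hg
    have hfirst : ∀ k ∈ Finset.range n,
        (sc ν m k) • ((bv A)^(ν+m-k) • ((av A)^(k+1) • x)) = g (k+1) := by
      intro k _
      rw [hg]
      simp only [Nat.succ_ne_zero, if_false, Nat.add_sub_cancel]
      have : ν+(m+1)-(k+1) = ν+m-k := by omega
      rw [this]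
    have hgn : g n = 0 := by
      rcases Nat.eq_zero_or_pos n with rfl | hpos
      · simp [hg]
      · rw [hg]
        simp only
        rw [if_neg (by omega)]
        have : (av A)^n • x = 0 := hn
        rw [this, smul_zero, smul_zero]
    have hshift : ∑ k ∈ Finset.range n, g (k+1) = ∑ k ∈ Finset.range n, g k := by
      have h1 : ∑ k ∈ Finset.range (n+1), g k = (∑ k ∈ Finset.range n, g (k+1)) + g 0 :=
        Finset.sum_range_succ' g n
      have h2 : ∑ k ∈ Finset.range (n+1), g k = (∑ k ∈ Finset.range n, g k) + g n :=
        Finset.sum_range_succ g n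
      have hg0 : g 0 = 0 := by simp [hg]
      rw [hg0, add_zero] at h1
      rw [hgn, add_zero] at h2
      rw [← h1, h2]
    rw [Finset.sum_congr rfl hfirst, Finset.sum_congr rfl hsecond, hshift]
    -- final coefficient merge
    rw [← Finset.sum_add_distrib]
    apply Finset.sum_congr rfl
    intro k _
    rcases Nat.eq_zero_or_pos k with rfl | hkpos
    · have h0 : g 0 = 0 := by simp [hg]
      rw [h0, zero_add, sc_succ_zero]
    · obtain ⟨k', rfl⟩ := Nat.exists_eq_succ_of_ne_zero (by omega : k ≠ 0)
      have hgk : g (k'+1) = (sc ν m k') • ((bv A)^(ν+(m+1)-(k'+1)) • ((av A)^(k'+1) • x)) := by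
        rw [hg]
        simp
      rw [hgk, sc_succ_succ, add_smul]


lemma nat_smul_eq (c : ℕ) (z : E) : c • z = algebraMap ℂ A ((c : ℕ) : ℂ) • z := by
  rw [map_natCast, Nat.cast_smul_eq_nsmul]

lemma aM_smul_cancel {q : ℂ} (hq : q ≠ 0) {z : E} (h : algebraMap ℂ A q • z = 0) : z = 0 := by
  have : algebraMap ℂ A q⁻¹ • (algebraMap ℂ A q • z) = z := by
    rw [← mul_smul, ← map_mul, inv_mul_cancel₀ hq, map_one, one_smul]
  rw [h, smul_zero] at this
  exact this.symm

lemma desc_diff (t k : ℕ) :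
    (t+1).descFactorial (k+1) = t.descFactorial (k+1) + (k+1) * t.descFactorial k := by
  rw [Nat.succ_descFactorial_succ, Nat.descFactorial_succ t k]
  rcases le_or_gt k t with h | h
  · have : t + 1 = (t - k) + (k + 1) := by omega
    rw [this, add_mul]
  · rw [Nat.descFactorial_eq_zero_iff_lt.mpr h]
    ring

/-- finite differences : if `∑_{k<n} desc(t₀+i, k) • η k = 0` for `i < n` then all `η k = 0`. -/
lemma fd : ∀ (n : ℕ) (η : ℕ → E) (t₀ : ℕ),
    (∀ i < n, ∑ k ∈ Finset.range n,
        algebraMap ℂ A (((t₀+i).descFactorial k : ℕ) : ℂ) • η k = 0) →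
    ∀ k < n, η k = 0 := by
  intro n
  induction n with
  | zero => intro η t₀ _ k hk; omega
  | succ n ih =>
    intro η t₀ hrel k hk
    set η' : ℕ → E := fun k => algebraMap ℂ A (((k+1 : ℕ) : ℕ) : ℂ) • η (k+1) with hη'
    have hrel' : ∀ i < n, ∑ k ∈ Finset.range n,
        algebraMap ℂ A (((t₀+i).descFactorial k : ℕ) : ℂ) • η' k = 0 := by
      intro i hi
      set t := t₀ + i with ht
      -- G(t+1) = G(t) + ∑ diff
      have hsplit : ∀ k ∈ Finset.range (n+1),
          algebraMap ℂ A (((t+1).descFactorial k : ℕ) : ℂ) • η k =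
          algebraMap ℂ A ((t.descFactorial k : ℕ) : ℂ) • η k +
          (if k = 0 then 0 else
            algebraMap ℂ A (((k * t.descFactorial (k-1) : ℕ) : ℂ)) • η k) := by
        intro k _
        rcases Nat.eq_zero_or_pos k with rfl | hkpos
        · simp
        · obtain ⟨k', rfl⟩ := Nat.exists_eq_succ_of_ne_zero (by omega : k ≠ 0)
          simp only [Nat.succ_eq_add_one, Nat.add_sub_cancel]
          rw [if_neg (by omega : ¬ (k' + 1 = 0))]
          have hdd : (t+1).descFactorial (k'+1)
              = t.descFactorial (k'+1) + (k'+1) * t.descFactorial k' := desc_diff t k'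
          rw [← add_smul, ← map_add, ← Nat.cast_add, ← hdd]
      have hG1 : ∑ k ∈ Finset.range (n+1),
          algebraMap ℂ A (((t+1).descFactorial k : ℕ) : ℂ) • η k = 0 := by
        have := hrel (i+1) (by omega)
        rw [ht]
        have harg : t₀ + (i+1) = t₀ + i + 1 := by omega
        rw [← harg]
        exact this
      have hG0 : ∑ k ∈ Finset.range (n+1),
          algebraMap ℂ A ((t.descFactorial k : ℕ) : ℂ) • η k = 0 := hrel i (by omega)
      rw [Finset.sum_congr rfl hsplit, Finset.sum_add_distrib, hG0, zero_add] at hG1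
      -- now hG1 : ∑_{k<n+1} (if k=0 then 0 else …) = 0 ; shift index
      rw [Finset.sum_range_succ' _ n] at hG1
      simp only [Nat.succ_ne_zero, if_false, reduceIte, Nat.add_sub_cancel, add_zero] at hG1
      -- hG1 : ∑_{k<n} aM((k+1) * desc t k) • η (k+1) = 0
      rw [← hG1]
      apply Finset.sum_congr rfl
      intro k _
      rw [hη']
      simp only
      rw [← mul_smul, ← map_mul, ← Nat.cast_mul, mul_comm (t.descFactorial k) (k+1)]
    have hη'0 : ∀ k < n, η' k = 0 := ih η' t₀ hrel'
    have hsucc : ∀ k < n, η (k+1) = 0 := by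
      intro k hk'
      have := hη'0 k hk'
      rw [hη'] at this
      simp only at this
      exact aM_smul_cancel (by exact_mod_cast Nat.succ_ne_zero k) this
    rcases Nat.eq_zero_or_pos k with rfl | hkpos
    · -- use relation at i = 0
      have h0 := hrel 0 (by omega)
      rw [Finset.sum_eq_single 0] at h0
      · simpa using h0
      · intro k hk0 hkne
        obtain ⟨k', rfl⟩ := Nat.exists_eq_succ_of_ne_zero hkne
        rw [hsucc k' (by simpa using hk0), smul_zero]
      · intro h; exact absurd (Finset.mem_range.mpr (by omega)) h
    · obtain ⟨k', rfl⟩ := Nat.exists_eq_succ_of_ne_zero (by omega : k ≠ 0)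
      exact hsucc k' (by omega)


lemma key_nat {n M i k : ℕ} (hi : i < n) (hk : k ≤ M + i) :
    sc (n-i) (M+i) k * (n-i-1).factorial * k.factorial
      = (M+i).descFactorial k * (M+n-k-1).factorial := by
  have h1 : (M+i).choose k * k.factorial = (M+i).descFactorial k := by
    rw [Nat.choose_eq_descFactorial_div_factorial,
      Nat.div_mul_cancel (Nat.factorial_dvd_descFactorial _ _)]
  have hν : n - i = (n - i - 1) + 1 := by omega
  have h2 : ascF (n-i) ((M+i)-k) * (n-i-1).factorial
      = ((n-i-1) + ((M+i)-k)).factorial := by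
    rw [hν]; exact ascF_mul_factorial _ _
  have h3 : (n-i-1) + ((M+i)-k) = M+n-k-1 := by omega
  calc sc (n-i) (M+i) k * (n-i-1).factorial * k.factorial
      = ((M+i).choose k * k.factorial) * (ascF (n-i) ((M+i)-k) * (n-i-1).factorial) := by
        rw [sc]; ring
    _ = (M+i).descFactorial k * (M+n-k-1).factorial := by rw [h1, h2, h3]

lemma comm_embA (P : PowerSeries ℂ) (m : ℕ) :
    (av A)^m * AHatAlgebra.embA P = AHatAlgebra.embA P * (av A)^m := by
  have hx : (av A) = AHatAlgebra.embA (PowerSeries.X : PowerSeries ℂ) :=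
    (AHatAlgebra.embA_X).symm
  rw [hx, ← map_pow, ← map_mul, ← map_mul, mul_comm]

lemma eB_one_smul (x : E) : eB A (1 : PowerSeries ℂ) • x = x := by
  rw [map_one, one_smul]

lemma eB_Xpow (ν : ℕ) : eB A ((PowerSeries.X : PowerSeries ℂ)^ν) = (bv A)^ν := by
  rw [map_pow]
  congr 1
  exact AHatAlgebra.embB_X

/-- MAIN: if `ℂ[[b]] • x ⊂ T_a(E)` then `Â • x ⊂ T_a(E)`. -/
lemma main (x : E) (hx : ∀ S : PowerSeries ℂ, ∃ m, (av A)^m • (eB A S • x) = 0) (w : A) :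
    ∃ m, (av A)^m • (w • x) = 0 := by
  obtain ⟨n, hn⟩ := hx 1
  rw [eB_one_smul] at hn
  rcases Nat.eq_zero_or_pos n with rfl | hnpos
  · have hx0 : x = 0 := by simpa using hn
    exact ⟨0, by simp [hx0]⟩
  -- annihilation degrees for b^ν • x
  have bpow : ∀ ν : ℕ, ∃ m, (av A)^m • ((bv A)^ν • x) = 0 := by
    intro ν
    obtain ⟨m, hm⟩ := hx ((PowerSeries.X : PowerSeries ℂ)^ν)
    rw [eB_Xpow] at hm
    exact ⟨m, hm⟩
  set mfun : ℕ → ℕ := fun ν => (bpow ν).choose with hmfun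
  have hmf : ∀ ν, (av A)^(mfun ν) • ((bv A)^ν • x) = 0 := fun ν => (bpow ν).choose_spec
  set M : ℕ := n + (Finset.range (n+1)).sup mfun with hM
  set L : ℕ := M + n with hL
  have hMn : n ≤ M := by rw [hM]; omega
  have hMle : ∀ ν ≤ n, mfun ν ≤ M := by
    intro ν hν
    have := Finset.le_sup (f := mfun) (Finset.mem_range.mpr (by omega : ν < n+1))
    omega
  have hLfun : ∀ ν < L, mfun ν ≤ (Finset.range L).sup mfun := by
    intro ν hν
    exact Finset.le_sup (Finset.mem_range.mpr hν)
  -- the n relations at common level L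
  have hrel : ∀ i < n, ∑ k ∈ Finset.range n,
      (sc (n-i) (M+i) k) • ((bv A)^(L-k) • ((av A)^k • x)) = 0 := by
    intro i hi
    have hkill : (av A)^(M+i) • ((bv A)^(n-i) • x) = 0 := by
      have h1 : mfun (n-i) ≤ M + i := le_trans (hMle _ (by omega)) (by omega)
      have h2 : (av A)^(M+i) = (av A)^((M+i) - mfun (n-i)) * (av A)^(mfun (n-i)) := by
        rw [← pow_add]; congr 1; omega
      rw [h2, mul_smul, hmf, smul_zero]
    have hst := stair x n hn (n-i) (M+i)
    rw [hkill] at hst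
    have hidx : ∀ k ∈ Finset.range n,
        (sc (n-i) (M+i) k) • ((bv A)^((n-i)+(M+i)-k) • ((av A)^k • x))
          = (sc (n-i) (M+i) k) • ((bv A)^(L-k) • ((av A)^k • x)) := by
      intro k _
      have h3 : (n-i)+(M+i)-k = L-k := by omega
      rw [h3]
    rw [Finset.sum_congr rfl hidx] at hst
    exact hst.symm
  -- normalized relations
  set η : ℕ → E := fun k =>
    algebraMap ℂ A (((L-k-1).factorial : ℂ) / (k.factorial : ℂ))
      • ((bv A)^(L-k) • ((av A)^k • x)) with hη
  have hrel' : ∀ i < n, ∑ k ∈ Finset.range n,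
      algebraMap ℂ A (((M+i).descFactorial k : ℕ) : ℂ) • η k = 0 := by
    intro i hi
    have h0 := hrel i hi
    have h1 := congrArg
      (fun z => algebraMap ℂ A ((((n-i-1).factorial : ℕ)) : ℂ) • z) h0
    simp only [smul_zero, Finset.smul_sum] at h1
    rw [← h1]
    apply Finset.sum_congr rfl
    intro k hk
    have hkn : k < n := Finset.mem_range.mp hk
    have hk' : k ≤ M + i := by omega
    have hnat := key_nat (n := n) (M := M) (i := i) (k := k) hi hk'
    have hcast : ((sc (n-i) (M+i) k : ℕ) : ℂ) * ((n-i-1).factorial : ℂ) * (k.factorial : ℂ)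
        = (((M+i).descFactorial k : ℕ) : ℂ) * ((L-k-1).factorial : ℂ) := by
      have hc := congrArg (fun t : ℕ => (t : ℂ)) hnat
      push_cast at hc ⊢
      rw [(by omega : M+n-k-1 = L-k-1)] at hc
      exact hc
    have hkf : (k.factorial : ℂ) ≠ 0 := Nat.cast_ne_zero.mpr (Nat.factorial_ne_zero k)
    have hsc : (((M+i).descFactorial k : ℕ) : ℂ) * (((L-k-1).factorial : ℂ) / (k.factorial : ℂ))
        = (((n-i-1).factorial : ℕ) : ℂ) * ((sc (n-i) (M+i) k : ℕ) : ℂ) := by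
      rw [← mul_div_assoc, div_eq_iff hkf]
      linear_combination -hcast
    calc algebraMap ℂ A (((M+i).descFactorial k : ℕ) : ℂ) • η k
        = algebraMap ℂ A (((M+i).descFactorial k : ℕ) : ℂ) •
            (algebraMap ℂ A (((L-k-1).factorial : ℂ) / (k.factorial : ℂ)) •
              ((bv A)^(L-k) • ((av A)^k • x))) := by rw [hη]
      _ = algebraMap ℂ A ((((n-i-1).factorial : ℕ) : ℂ) * ((sc (n-i) (M+i) k : ℕ) : ℂ)) •
            ((bv A)^(L-k) • ((av A)^k • x)) := by
            rw [smul_smul, ← map_mul, hsc]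
      _ = algebraMap ℂ A (((n-i-1).factorial : ℕ) : ℂ) •
            ((sc (n-i) (M+i) k) • ((bv A)^(L-k) • ((av A)^k • x))) := by
            rw [map_mul, mul_smul,
              ← nat_smul_eq (sc (n-i) (M+i) k) ((bv A)^(L-k) • ((av A)^k • x))]
  -- conclude b^L • x = 0
  have hη0 : η 0 = 0 := fd n η M hrel' 0 hnpos
  have hbL : (bv A)^L • x = 0 := by
    rw [hη] at hη0
    simp only at hη0
    have hq : (((L-0-1).factorial : ℂ) / ((Nat.factorial 0 : ℕ) : ℂ)) ≠ 0 := by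
      have h1 : ((L-0-1).factorial : ℂ) ≠ 0 :=
        Nat.cast_ne_zero.mpr (Nat.factorial_ne_zero _)
      have h2 : ((Nat.factorial 0 : ℕ) : ℂ) ≠ 0 :=
        Nat.cast_ne_zero.mpr (Nat.factorial_ne_zero _)
      exact div_ne_zero h1 h2
    have h3 := aM_smul_cancel hq hη0
    rw [pow_zero, one_smul] at h3
    have h4 : L - 0 = L := by omega
    rw [h4] at h3
    exact h3
  -- final assembly via expansion of w at order L
  obtain ⟨y, hw⟩ := AHatAlgebra.expand w L
  refine ⟨(Finset.range L).sup mfun, ?_⟩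
  have hbv : (AHatAlgebra.b : A) = bv A := rfl
  rw [hbv] at hw
  rw [hw, add_smul, smul_add]
  have htail : (y * (bv A)^L) • x = 0 := by
    rw [mul_smul, hbL, smul_zero]
  rw [htail, smul_zero, add_zero, Finset.sum_smul, Finset.smul_sum]
  apply Finset.sum_eq_zero
  intro ν hν
  have hνL : ν < L := Finset.mem_range.mp hν
  have hsplit : (av A)^((Finset.range L).sup mfun)
      = (av A)^((Finset.range L).sup mfun - mfun ν) * (av A)^(mfun ν) := by
    rw [← pow_add]; congr 1
    have := hLfun ν hνL
    omega
  rw [mul_smul, ← mul_smul, comm_embA, mul_smul, hsplit, mul_smul, hmf, smul_zero, smul_zero]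


lemma Ta_add {u v : E} (hu : ∃ n, (av A)^n • u = 0) (hv : ∃ n, (av A)^n • v = 0) :
    ∃ n, (av A)^n • (u+v) = 0 := by
  obtain ⟨n1, h1⟩ := hu
  obtain ⟨n2, h2⟩ := hv
  refine ⟨n1+n2, ?_⟩
  have e1 : (av A)^(n1+n2) • u = 0 := by
    have hp : (av A)^(n1+n2) = (av A)^(n2) * (av A)^(n1) := by
      rw [← pow_add]; congr 1; omega
    rw [hp, mul_smul, h1, smul_zero]
  have e2 : (av A)^(n1+n2) • v = 0 := by
    have hp : (av A)^(n1+n2) = (av A)^(n1) * (av A)^(n2) := by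
      rw [← pow_add]
    rw [hp, mul_smul, h2, smul_zero]
  rw [smul_add, e1, e2, add_zero]

end S5

open AHat in
/-- For any left `Â`-module `E`, the subset
`T̂_a(E) = { x ∈ E : ℂ[[b]]·x ⊂ T_a(E) }` is a sub-`Â`-module of `E`, and it is
the largest sub-`Â`-module of `E` contained in `T_a(E)`. -/
theorem statement5 (A : Type u) [Ring A] [Algebra ℂ A] [AHatAlgebra A]
    (E : Type v) [AddCommGroup E] [Module A E]
    (Ta hatTa : Set E)
    (hTa : Ta = {x : E | ∃ n : ℕ, (av A ^ n) • x = 0})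
    (hhatTa : hatTa = {x : E | ∀ S : PowerSeries ℂ, eB A S • x ∈ Ta}) :
    (∃ M : Submodule A E, (M : Set E) = hatTa) ∧
    hatTa ⊆ Ta ∧
    ∀ M : Submodule A E, (M : Set E) ⊆ Ta → (M : Set E) ⊆ hatTa := by
  subst hhatTa
  subst hTa
  refine ⟨?_, ?_, ?_⟩
  · -- hatTa is a submodule
    refine ⟨{ carrier := {x : E | ∀ S : PowerSeries ℂ, eB A S • x ∈
        {x : E | ∃ n : ℕ, (av A ^ n) • x = 0}}
              add_mem' := ?_
              zero_mem' := ?_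
              smul_mem' := ?_ }, rfl⟩
    · intro u v hu hv S
      have h1 := hu S
      have h2 := hv S
      rw [Set.mem_setOf_eq] at h1 h2 ⊢
      rw [smul_add]
      exact S5.Ta_add h1 h2
    · intro S
      rw [Set.mem_setOf_eq, smul_zero]
      exact ⟨0, smul_zero _⟩
    · intro c u hu S
      rw [Set.mem_setOf_eq] at hu ⊢
      obtain ⟨m, hm⟩ := S5.main u hu (eB A S * c)
      rw [mul_smul] at hm
      exact ⟨m, hm⟩
  · -- hatTa ⊆ Ta
    intro x hx
    rw [Set.mem_setOf_eq] at hx ⊢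
    have := hx 1
    rwa [S5.eB_one_smul] at this
  · -- maximality
    intro M hM x hx S
    exact hM (Submodule.smul_mem M (eB A S) hx)
end
end

section
/- Let E be a simple pole (a,b)-module (respectively a regular (a,b)-module). Then for any change of variable θ, the left Â-module θ_*(E) is a simple pole (a,b)-module (respectively a regular (a,b)-module). -/
/- Axiomatized framework for Barlet's algebra `Â` and its (a,b)-modules. -/

open PowerSeries

noncomputable section

universe u v

namespace S7aux
open AHat

variable (A : Type u) [Ring A] [Algebra ℂ A] [AHatAlgebra A]

theorem hab : av A * bv A = bv A * av A + bv A ^ 2 := by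
  have h := AHatAlgebra.comm_ab (A := A)
  have : av A * bv A - bv A * av A = bv A ^ 2 := h
  linear_combination (norm := noncomm_ring) this

theorem eA_X : eA A PowerSeries.X = av A := AHatAlgebra.embA_X
theorem eB_X : eB A PowerSeries.X = bv A := AHatAlgebra.embB_X

theorem a_mul_b_pow (k : ℕ) :
    av A * bv A ^ k = bv A ^ k * av A + (k : A) * bv A ^ (k+1) := by
  induction k with
  | zero => simp
  | succ k ih =>
    have h := hab A
    calc av A * bv A ^ (k+1) = (av A * bv A ^ k) * bv A := by
          rw [mul_assoc, pow_succ]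
      _ = (bv A ^ k * av A + (k : A) * bv A ^ (k+1)) * bv A := by rw [ih]
      _ = bv A ^ k * (av A * bv A) + (k : A) * bv A ^ (k+2) := by
          noncomm_ring
      _ = bv A ^ k * (bv A * av A + bv A ^ 2) + (k : A) * bv A ^ (k+2) := by rw [h]
      _ = bv A ^ (k+1) * av A + ((k:A) + 1) * bv A ^ (k+2) := by noncomm_ring
      _ = bv A ^ (k+1) * av A + ((k+1 : ℕ) : A) * bv A ^ (k+1+1) := by
          push_cast; ring_nf

/-- The defect element `κ_t = t(a)·b − b·t(a) − b·t'(a)·b`. -/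
def kk (t : PowerSeries ℂ) : A :=
  eA A t * bv A - bv A * eA A t - bv A * eA A t.derivativeFun * bv A

theorem kk_C (c : ℂ) : kk A (C c) = 0 := by
  unfold kk
  have h1 : eA A (C c) = algebraMap ℂ A c := by
    have : (C c : PowerSeries ℂ) = algebraMap ℂ (PowerSeries ℂ) c := rfl
    rw [this, AlgHom.commutes]
  rw [show derivativeFun (C c : PowerSeries ℂ) = 0 from derivativeFun_C (R := ℂ) (r := c), map_zero, h1]
  rw [Algebra.commutes c (bv A)]
  noncomm_ring

theorem kk_add (t s : PowerSeries ℂ) : kk A (t + s) = kk A t + kk A s := by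
  unfold kk
  rw [derivativeFun_add, map_add, map_add]
  noncomm_ring

theorem derivativeFun_X' : derivativeFun (X : PowerSeries ℂ) = 1 := by
  ext n; rw [show derivativeFun (X : PowerSeries ℂ) = d⁄dX ℂ X from rfl, coeff_derivativeFun]
  rcases n with _|n <;> simp [coeff_X]

theorem kk_X_mul (t : PowerSeries ℂ) :
    kk A (X * t) = (av A - bv A) * kk A t := by
  have hD : derivativeFun (X * t) = t + X * derivativeFun t := by
    rw [derivativeFun_mul, derivativeFun_X', smul_eq_mul, smul_eq_mul, mul_one, add_comm]
  have hXt : eA A (X * t) = av A * eA A t := by rw [map_mul, eA_X]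
  have hsum : eA A (t + X * derivativeFun t) = eA A t + av A * eA A t.derivativeFun := by
    rw [map_add, map_mul, eA_X]
  unfold kk
  rw [hD, hXt, hsum]
  have h0 : av A * bv A - (bv A * av A + bv A ^ 2) = 0 := by
    rw [hab A]; noncomm_ring
  have expand :
      av A * eA A t * bv A - bv A * (av A * eA A t)
        - bv A * (eA A t + av A * eA A t.derivativeFun) * bv A
      = (av A - bv A) * (eA A t * bv A - bv A * eA A t - bv A * eA A t.derivativeFun * bv A)
        + (av A * bv A - (bv A * av A + bv A ^ 2)) * (eA A t + eA A t.derivativeFun * bv A) := by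
    noncomm_ring
  rw [expand, h0, zero_mul, add_zero]

theorem kk_deep (N : ℕ) (t : PowerSeries ℂ) :
    ∃ s : PowerSeries ℂ, kk A t = (av A - bv A) ^ N * kk A s := by
  induction N generalizing t with
  | zero => exact ⟨t, by rw [pow_zero, one_mul]⟩
  | succ N ih =>
    obtain ⟨q, hq⟩ : ∃ q, t = C (constantCoeff t) + X * q :=
      ⟨mk (fun n => coeff (n+1) t), by
        ext n; rcases n with _|n <;> simp [coeff_succ_X_mul]⟩
    obtain ⟨s, hs⟩ := ih q
    refine ⟨s, ?_⟩
    rw [hq, kk_add, kk_C, zero_add, kk_X_mul, hs, ← mul_assoc, ← pow_succ']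

section ModulePart

variable (A : Type u) [Ring A] [Algebra ℂ A] [AHatAlgebra A]
variable (E : Type v) [AddCommGroup E] [Module A E]

/-- `v ∈ b^k·E`. -/
def InD (k : ℕ) (v : E) : Prop := ∃ w : E, v = bv A ^ k • w

variable {A E}

theorem InD_zero (k : ℕ) : InD A E k 0 := ⟨0, by rw [smul_zero]⟩

theorem InD_add {k : ℕ} {v w : E} (hv : InD A E k v) (hw : InD A E k w) :
    InD A E k (v + w) := by
  obtain ⟨v', rfl⟩ := hv; obtain ⟨w', rfl⟩ := hw
  exact ⟨v' + w', by rw [smul_add]⟩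

theorem InD_sub {k : ℕ} {v w : E} (hv : InD A E k v) (hw : InD A E k w) :
    InD A E k (v - w) := by
  obtain ⟨v', rfl⟩ := hv; obtain ⟨w', rfl⟩ := hw
  exact ⟨v' - w', by rw [smul_sub]⟩

theorem InD_sum {k : ℕ} {ι : Type*} (s : Finset ι) (f : ι → E)
    (h : ∀ i ∈ s, InD A E k (f i)) : InD A E k (∑ i ∈ s, f i) := by
  classical
  induction s using Finset.induction with
  | empty => simpa using InD_zero k
  | insert _ _ hx ih =>
    rw [Finset.sum_insert hx]
    exact InD_add (h _ (Finset.mem_insert_self _ _))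
      (ih fun i hi => h i (Finset.mem_insert_of_mem hi))

theorem InD_b {k : ℕ} {v : E} (hv : InD A E k v) : InD A E (k+1) (bv A • v) := by
  obtain ⟨w, rfl⟩ := hv
  exact ⟨w, by rw [← mul_smul, ← pow_succ']⟩

theorem InD_mono {k l : ℕ} (hkl : k ≤ l) {v : E} (hv : InD A E l v) : InD A E k v := by
  obtain ⟨w, rfl⟩ := hv
  exact ⟨bv A ^ (l - k) • w, by rw [← mul_smul, ← pow_add, Nat.add_sub_cancel' hkl]⟩

theorem InD_a (hsp : ∀ x : E, ∃ y : E, av A • x = bv A • y) {k : ℕ} {v : E} (hv : InD A E k v) : InD A E (k+1) (av A • v) := by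
  obtain ⟨w, rfl⟩ := hv
  rw [← mul_smul, S7aux.a_mul_b_pow, add_smul, mul_smul, mul_smul]
  obtain ⟨w0, hw0⟩ := hsp w
  rw [hw0, ← mul_smul, ← pow_succ]
  refine InD_add ⟨w0, rfl⟩ ?_
  have : ((k:A) : A) • (bv A ^ (k+1) • w) = bv A ^ (k+1) • (((k:A)) • w) := by
    rw [← mul_smul, ← mul_smul, (Nat.cast_commute k (bv A ^ (k+1))).eq]
  rw [this]
  exact ⟨(k : A) • w, rfl⟩

theorem InD_ab (hsp : ∀ x : E, ∃ y : E, av A • x = bv A • y) {k : ℕ} {v : E} (hv : InD A E k v) :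
    InD A E (k+1) ((av A - bv A) • v) := by
  rw [sub_smul]
  exact InD_sub (InD_a hsp hv) (InD_b hv)

theorem InD_abpow (hsp : ∀ x : E, ∃ y : E, av A • x = bv A • y) (N : ℕ) (v : E) : InD A E N ((av A - bv A) ^ N • v) := by
  induction N with
  | zero => exact ⟨v, by rw [pow_zero, pow_zero]⟩
  | succ N ih =>
    rw [pow_succ', mul_smul]
    exact InD_ab hsp ih

end ModulePart
section BasisPart

variable {A : Type u} [Ring A] [Algebra ℂ A] [AHatAlgebra A]
variable {E : Type v} [AddCommGroup E] [Module A E]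
variable [Module (PowerSeries ℂ) E]
variable {ι : Type*} [Fintype ι]

theorem InD_dvd (hPS : ∀ (S : PowerSeries ℂ) (v : E), S • v = eB A S • v)
    (B : Module.Basis ι (PowerSeries ℂ) E) {k : ℕ} {v : E} (hv : InD A E k v) (i : ι) :
    (X : PowerSeries ℂ) ^ k ∣ B.repr v i := by
  obtain ⟨w, rfl⟩ := hv
  have h1 : bv A ^ k • w = ((X : PowerSeries ℂ) ^ k) • w := by
    rw [hPS, map_pow, S7aux.eB_X]
  rw [h1, map_smul, Finsupp.smul_apply, smul_eq_mul]
  exact Dvd.intro _ rfl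

theorem InD_sep (hPS : ∀ (S : PowerSeries ℂ) (v : E), S • v = eB A S • v)
    (B : Module.Basis ι (PowerSeries ℂ) E) {v : E} (h : ∀ N, InD A E N v) : v = 0 := by
  have : B.repr v = 0 := by
    refine Finsupp.ext fun i => ?_
    refine PowerSeries.ext fun n => ?_
    have hd := InD_dvd hPS B (h (n+1)) i
    rw [X_pow_dvd_iff] at hd
    simpa using hd n (Nat.lt_succ_self n)
  have := congrArg B.repr.symm this
  rw [LinearEquiv.symm_apply_apply] at this
  rw [this, map_zero]

theorem b_inj (hPS : ∀ (S : PowerSeries ℂ) (v : E), S • v = eB A S • v)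
    (B : Module.Basis ι (PowerSeries ℂ) E) {v w : E} (h : bv A • v = bv A • w) : v = w := by
  have h1 : (X : PowerSeries ℂ) • v = (X : PowerSeries ℂ) • w := by
    rw [hPS, hPS, S7aux.eB_X]; exact h
  have h2 : B.repr v = B.repr w := by
    refine Finsupp.ext fun i => ?_
    have := congrArg (fun z => B.repr z i) h1
    simp only [map_smul, Finsupp.smul_apply, smul_eq_mul] at this
    exact mul_left_cancel₀ X_ne_zero this
  have := congrArg B.repr.symm h2
  rwa [LinearEquiv.symm_apply_apply, LinearEquiv.symm_apply_apply] at this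

/-- The fundamental exact commutation identity on a simple pole module:
`t(a)·(b·v) = b·(t(a)·v) + b·(t'(a)·(b·v))`. -/
theorem nat_id (hPS : ∀ (S : PowerSeries ℂ) (v : E), S • v = eB A S • v)
    (B : Module.Basis ι (PowerSeries ℂ) E)
    (hsp : ∀ x : E, ∃ y : E, av A • x = bv A • y)
    (t : PowerSeries ℂ) (v : E) :
    eA A t • (bv A • v)
      = bv A • (eA A t • v) + bv A • (eA A t.derivativeFun • (bv A • v)) := by
  have hk : ∀ N, InD A E N (S7aux.kk A t • v) := by
    intro N
    obtain ⟨s, hs⟩ := S7aux.kk_deep A N t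
    rw [hs, mul_smul]
    exact InD_abpow hsp N _
  have h0 : S7aux.kk A t • v = 0 := InD_sep hPS B hk
  have hexp : S7aux.kk A t • v
      = eA A t • (bv A • v) - bv A • (eA A t • v)
        - bv A • (eA A t.derivativeFun • (bv A • v)) := by
    simp [S7aux.kk, sub_smul, mul_smul]
  rw [hexp] at h0
  rw [sub_sub] at h0
  exact sub_eq_zero.mp h0

theorem eA_InD (hPS : ∀ (S : PowerSeries ℂ) (v : E), S • v = eB A S • v)
    (B : Module.Basis ι (PowerSeries ℂ) E)
    (hsp : ∀ x : E, ∃ y : E, av A • x = bv A • y)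
    (g : PowerSeries ℂ) {k : ℕ} {v : E} (hv : InD A E k v) :
    InD A E k (eA A g • v) := by
  induction k generalizing g v with
  | zero => exact ⟨eA A g • v, by rw [pow_zero, one_smul]⟩
  | succ k ih =>
    obtain ⟨w, rfl⟩ := hv
    have hsplit : bv A ^ (k+1) • w = bv A • (bv A ^ k • w) := by
      rw [← mul_smul, ← pow_succ']
    rw [hsplit, nat_id hPS B hsp]
    refine InD_add (InD_b (ih g ⟨w, rfl⟩)) (InD_b (ih _ ?_))
    exact ⟨bv A • w, by rw [← mul_smul, ← mul_smul, (Commute.pow_self (bv A) k).eq]⟩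

end BasisPart
theorem tail_dec (t : PowerSeries ℂ) :
    t = C (constantCoeff t) + X * mk (fun n => coeff (n+1) t) := by
  ext n; rcases n with _|n <;> simp [coeff_succ_X_mul]

theorem split_dec (t : PowerSeries ℂ) (N : ℕ) :
    t = (∑ k ∈ Finset.range N, C (coeff k t) * X ^ k)
      + X ^ N * mk (fun n => coeff (n + N) t) := by
  ext n
  rw [map_add, map_sum, coeff_X_pow_mul']
  by_cases h : N ≤ n
  · rw [if_pos h]
    have hz : ∀ k ∈ Finset.range N, coeff n (C (coeff k t) * X ^ k) = 0 := by
      intro k hk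
      have hk' := Finset.mem_range.mp hk
      rw [coeff_C_mul, coeff_X_pow, if_neg (by omega : ¬ n = k), mul_zero]
    rw [Finset.sum_eq_zero hz, coeff_mk, zero_add]
    have : n - N + N = n := by omega
    rw [this]
  · rw [if_neg h, add_zero]
    rw [Finset.sum_eq_single n]
    · rw [coeff_C_mul, coeff_X_pow, if_pos rfl, mul_one]
    · intro k _ hk; rw [coeff_C_mul, coeff_X_pow, if_neg (fun hh => hk hh.symm), mul_zero]
    · intro hn; exact absurd (Finset.mem_range.mpr (by omega)) hn

section ThetaPart

variable {A : Type u} [Ring A] [Algebra ℂ A] [AHatAlgebra A]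
variable {E : Type v} [AddCommGroup E] [Module A E]
variable [Module (PowerSeries ℂ) E]
variable {ι : Type*} [Fintype ι]

/-- The twisted coordinate map. -/
def Psi (Θ : A ≃ₐ[ℂ] A) (B : Module.Basis ι (PowerSeries ℂ) E) (σ : ι → PowerSeries ℂ) : E :=
  ∑ i, Θ (eB A (σ i)) • B i

theorem Psi_add (Θ : A ≃ₐ[ℂ] A) (B : Module.Basis ι (PowerSeries ℂ) E)
    (σ σ' : ι → PowerSeries ℂ) :
    Psi Θ B (fun i => σ i + σ' i) = Psi Θ B σ + Psi Θ B σ' := by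
  unfold Psi
  rw [← Finset.sum_add_distrib]
  refine Finset.sum_congr rfl fun i _ => ?_
  rw [map_add, map_add, add_smul]

theorem eAw_cancel {θ : PowerSeries ℂ} {w : PowerSeries ℂ}
    (hw : θ.derivativeFun * w = 1) (v : E) :
    eA A w • (eA A θ.derivativeFun • v) = v := by
  rw [← mul_smul, ← map_mul, mul_comm, hw, map_one, one_smul]

section MainLemmas

variable (hPS : ∀ (S : PowerSeries ℂ) (v : E), S • v = eB A S • v)
  (B : Module.Basis ι (PowerSeries ℂ) E)
  (hsp : ∀ x : E, ∃ y : E, av A • x = bv A • y)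
  (Θ : A ≃ₐ[ℂ] A) (θ : PowerSeries ℂ)
  (hΘb : Θ (bv A) = bv A * eA A θ.derivativeFun)
  (w : PowerSeries ℂ) (hw : θ.derivativeFun * w = 1)

include hΘb in
theorem Tb_smul (v : E) :
    Θ (bv A) • v = bv A • (eA A θ.derivativeFun • v) := by
  rw [hΘb, mul_smul]

include hPS B hsp hΘb in
theorem Tdeep (N : ℕ) (v : E) : InD A E N ((Θ (bv A)) ^ N • v) := by
  induction N generalizing v with
  | zero => exact ⟨_, by rw [pow_zero, pow_zero]⟩
  | succ N ih =>
    rw [pow_succ', mul_smul, Tb_smul Θ θ hΘb]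
    exact InD_b (eA_InD hPS B hsp _ (ih _))

include hPS hsp hΘb hw in
theorem strict : ∀ (M : ℕ) (σ : ι → PowerSeries ℂ),
    InD A E M (Psi Θ B σ) → ∀ i, (X : PowerSeries ℂ) ^ M ∣ σ i := by
  classical
  intro M
  induction M with
  | zero => intro σ _ i; rw [pow_zero]; exact one_dvd _
  | succ M ih =>
    intro σ hσ i
    set c : ι → ℂ := fun i => constantCoeff (σ i) with hc
    set τ : ι → PowerSeries ℂ := fun i => mk (fun n => coeff (n+1) (σ i)) with hτ
    have hdec : ∀ j, σ j = C (c j) + X * τ j := fun j => tail_dec (σ j)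
    have hkey : Psi Θ B σ
        = (∑ j, algebraMap ℂ A (c j) • B j) + Θ (bv A) • Psi Θ B τ := by
      unfold Psi
      rw [Finset.smul_sum, ← Finset.sum_add_distrib]
      refine Finset.sum_congr rfl fun j _ => ?_
      rw [hdec j, map_add, map_add, add_smul, map_mul, map_mul, eB_X, mul_smul]
      congr 2
      have : (C (c j) : PowerSeries ℂ) = algebraMap ℂ (PowerSeries ℂ) (c j) := rfl
      rw [this, AlgHom.commutes, AlgEquiv.commutes]
    -- the constant part lies in b·E
    have hS0 : InD A E 1 (∑ j, algebraMap ℂ A (c j) • B j) := by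
      have h1 : InD A E 1 (Psi Θ B σ) := InD_mono (by omega) hσ
      have h2 : InD A E 1 (Θ (bv A) • Psi Θ B τ) := by
        rw [Tb_smul Θ θ hΘb]
        exact ⟨_, by rw [pow_one]⟩
      have := InD_sub h1 h2
      rw [hkey, add_sub_cancel_right] at this
      exact this
    -- hence all constants vanish
    have hc0 : ∀ j, c j = 0 := by
      intro j
      have hdvd : (X : PowerSeries ℂ) ∣ B.repr (∑ j, algebraMap ℂ A (c j) • B j) j := by
        have := InD_dvd hPS B hS0 j
        rwa [pow_one] at this
      have hrepr : B.repr (∑ j, algebraMap ℂ A (c j) • B j) j = C (c j) := by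
        have hsm : ∀ j', algebraMap ℂ A (c j') • B j' = (C (c j') : PowerSeries ℂ) • B j' := by
          intro j'
          rw [hPS]
          congr 1
          have : (C (c j') : PowerSeries ℂ) = algebraMap ℂ (PowerSeries ℂ) (c j') := rfl
          rw [this, AlgHom.commutes]
        have hsum : (∑ j', algebraMap ℂ A (c j') • B j')
            = ∑ j', (C (c j') : PowerSeries ℂ) • B j' :=
          Finset.sum_congr rfl fun j' _ => hsm j'
        rw [hsum, map_sum, Finsupp.finset_sum_apply]
        have hterm : ∀ j', (B.repr ((C (c j') : PowerSeries ℂ) • B j')) j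
            = if j' = j then C (c j') else 0 := by
          intro j'
          rw [map_smul, Module.Basis.repr_self, Finsupp.smul_apply, Finsupp.single_apply]
          split <;> simp
        rw [Finset.sum_congr rfl fun j' _ => hterm j']
        simp
      rw [hrepr, X_dvd_iff] at hdvd
      simpa using hdvd
    -- so σ = X·τ and we can divide by T
    have hστ : ∀ j, σ j = X * τ j := by
      intro j; rw [hdec j, hc0 j, map_zero, zero_add]
    have hPsi : Psi Θ B σ = Θ (bv A) • Psi Θ B τ := by
      rw [hkey]
      have : ∀ j, algebraMap ℂ A (c j) • B j = 0 := by
        intro j; rw [hc0 j, map_zero, zero_smul]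
      rw [Finset.sum_congr rfl fun j _ => this j]
      simp
    obtain ⟨z, hz⟩ := hσ
    have hz' : bv A • (eA A θ.derivativeFun • Psi Θ B τ) = bv A • (bv A ^ M • z) := by
      rw [← Tb_smul Θ θ hΘb, ← hPsi, hz, ← mul_smul, ← pow_succ']
    have hu : eA A θ.derivativeFun • Psi Θ B τ = bv A ^ M • z := b_inj hPS B hz'
    have hτInD : InD A E M (Psi Θ B τ) := by
      have h1 : InD A E M (eA A θ.derivativeFun • Psi Θ B τ) := ⟨z, hu⟩
      have h2 := eA_InD hPS B hsp w h1
      rwa [eAw_cancel hw] at h2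
    have hdvdτ := ih τ hτInD i
    obtain ⟨q, hq⟩ := hdvdτ
    exact ⟨q, by rw [hστ i, hq, ← mul_assoc, ← pow_succ']⟩

end MainLemmas

end ThetaPart
section SpanPart

variable {A : Type u} [Ring A] [Algebra ℂ A] [AHatAlgebra A]
variable {E : Type v} [AddCommGroup E] [Module A E]
variable [Module (PowerSeries ℂ) E]
variable {ι : Type*} [Fintype ι]

variable (hPS : ∀ (S : PowerSeries ℂ) (v : E), S • v = eB A S • v)
  (B : Module.Basis ι (PowerSeries ℂ) E)
  (hsp : ∀ x : E, ∃ y : E, av A • x = bv A • y)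
  (Θ : A ≃ₐ[ℂ] A) (θ : PowerSeries ℂ)
  (hΘb : Θ (bv A) = bv A * eA A θ.derivativeFun)
  (w : PowerSeries ℂ) (hw : θ.derivativeFun * w = 1)

/-- constant coefficients of the coordinates. -/
def cf (B : Module.Basis ι (PowerSeries ℂ) E) (v : E) (i : ι) : ℂ :=
  constantCoeff (B.repr v i)

/-- "tail" of an element: `v = Σ cf·eᵢ + b·(tl v)`. -/
def tl (B : Module.Basis ι (PowerSeries ℂ) E) (v : E) : E :=
  ∑ i, (mk (fun n => coeff (n+1) (B.repr v i)) : PowerSeries ℂ) • B i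

include hPS in
theorem decomp (v : E) :
    v = (∑ i, algebraMap ℂ A (cf B v i) • B i) + bv A • tl B v := by
  unfold cf tl
  conv_lhs => rw [← B.sum_repr v]
  rw [Finset.smul_sum, ← Finset.sum_add_distrib]
  refine Finset.sum_congr rfl fun i _ => ?_
  have h1 : algebraMap ℂ A (constantCoeff (B.repr v i)) • B i
      = (C (constantCoeff (B.repr v i)) : PowerSeries ℂ) • B i := by
    rw [hPS]
    congr 1
    have hCc : (C (constantCoeff (B.repr v i)) : PowerSeries ℂ)
        = algebraMap ℂ (PowerSeries ℂ) (constantCoeff (B.repr v i)) := rfl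
    rw [hCc, AlgHom.commutes]
  have h2 : bv A • ((mk (fun n => coeff (n+1) (B.repr v i)) : PowerSeries ℂ) • B i)
      = ((X : PowerSeries ℂ) * mk (fun n => coeff (n+1) (B.repr v i))) • B i := by
    have hx : (X : PowerSeries ℂ) • ((mk (fun n => coeff (n+1) (B.repr v i)) : PowerSeries ℂ) • B i)
        = bv A • ((mk (fun n => coeff (n+1) (B.repr v i)) : PowerSeries ℂ) • B i) := by
      rw [hPS X, eB_X]
    rw [← hx, ← mul_smul]
  rw [h1, h2, ← add_smul, ← tail_dec (B.repr v i)]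

/-- the approximation sequence. -/
def xs (u' : A) (B : Module.Basis ι (PowerSeries ℂ) E) (x : E) : ℕ → E :=
  fun k => Nat.rec x (fun _ xk => u' • tl B xk) k

include hPS hw hΘb in
theorem xs_step (x : E) (k : ℕ) :
    xs (eA A w) B x k = (∑ i, algebraMap ℂ A (cf B (xs (eA A w) B x k) i) • B i)
      + Θ (bv A) • xs (eA A w) B x (k+1) := by
  have h1 : Θ (bv A) • xs (eA A w) B x (k+1) = bv A • tl B (xs (eA A w) B x k) := by
    show Θ (bv A) • (eA A w • tl B (xs (eA A w) B x k)) = _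
    rw [hΘb, mul_smul, ← mul_smul (eA A θ.derivativeFun), ← map_mul, hw, map_one, one_smul]
  rw [h1]
  exact decomp hPS B _
include hPS B hsp hΘb hw in
theorem span_exists (x : E) : ∃ σ : ι → PowerSeries ℂ, Psi Θ B σ = x := by
  set Sg : ι → PowerSeries ℂ := fun i => mk (fun k => cf B (xs (eA A w) B x k) i) with hSg
  refine ⟨Sg, ?_⟩
  have claim : ∀ M : ℕ,
      x = Psi Θ B (fun i => ∑ k ∈ Finset.range M, C (cf B (xs (eA A w) B x k) i) * X ^ k)
        + (Θ (bv A)) ^ M • xs (eA A w) B x M := by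
    intro M
    induction M with
    | zero =>
      simp only [Finset.range_zero, Finset.sum_empty, pow_zero, one_smul]
      have : Psi Θ B (fun _ => (0:PowerSeries ℂ)) = 0 := by
        unfold Psi; simp
      rw [this, zero_add]
      rfl
    | succ M ih =>
      have hstep := xs_step hPS B Θ θ hΘb w hw x M
      have hswap : ∀ i, (Θ (bv A))^M • (algebraMap ℂ A (cf B (xs (eA A w) B x M) i) • B i)
          = Θ (eB A (C (cf B (xs (eA A w) B x M) i) * X ^ M)) • B i := by
        intro i
        rw [← mul_smul, map_mul, map_pow, eB_X, map_mul, map_pow]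
        have hC : Θ (eB A (C (cf B (xs (eA A w) B x M) i)))
            = algebraMap ℂ A (cf B (xs (eA A w) B x M) i) := by
          have hCc : (C (cf B (xs (eA A w) B x M) i) : PowerSeries ℂ)
              = algebraMap ℂ (PowerSeries ℂ) (cf B (xs (eA A w) B x M) i) := rfl
          rw [hCc, AlgHom.commutes, AlgEquiv.commutes]
        rw [hC, (Algebra.commutes (cf B (xs (eA A w) B x M) i) ((Θ (bv A))^M)).symm]
      have hR : (Θ (bv A)) ^ M • xs (eA A w) B x M
          = (∑ i, Θ (eB A (C (cf B (xs (eA A w) B x M) i) * X ^ M)) • B i)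
            + (Θ (bv A)) ^ (M+1) • xs (eA A w) B x (M+1) := by
        conv_lhs => rw [hstep]
        rw [smul_add, Finset.smul_sum, ← mul_smul, ← pow_succ]
        exact congrArg₂ (· + ·) (Finset.sum_congr rfl fun i _ => hswap i) rfl
      have hTr : Psi Θ B (fun i => ∑ k ∈ Finset.range (M+1), C (cf B (xs (eA A w) B x k) i) * X ^ k)
          = Psi Θ B (fun i => ∑ k ∈ Finset.range M, C (cf B (xs (eA A w) B x k) i) * X ^ k)
            + (∑ i, Θ (eB A (C (cf B (xs (eA A w) B x M) i) * X ^ M)) • B i) := by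
        have hfun : (fun i => ∑ k ∈ Finset.range (M+1), C (cf B (xs (eA A w) B x k) i) * X ^ k)
            = fun i => (∑ k ∈ Finset.range M, C (cf B (xs (eA A w) B x k) i) * X ^ k)
              + C (cf B (xs (eA A w) B x M) i) * X ^ M := by
          funext i; rw [Finset.sum_range_succ]
        rw [hfun]
        exact Psi_add Θ B _ _
      calc x = Psi Θ B (fun i => ∑ k ∈ Finset.range M, C (cf B (xs (eA A w) B x k) i) * X ^ k)
            + (Θ (bv A)) ^ M • xs (eA A w) B x M := ih
        _ = Psi Θ B (fun i => ∑ k ∈ Finset.range M, C (cf B (xs (eA A w) B x k) i) * X ^ k)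
            + ((∑ i, Θ (eB A (C (cf B (xs (eA A w) B x M) i) * X ^ M)) • B i)
              + (Θ (bv A)) ^ (M+1) • xs (eA A w) B x (M+1)) := by rw [hR]
        _ = Psi Θ B (fun i => ∑ k ∈ Finset.range (M+1), C (cf B (xs (eA A w) B x k) i) * X ^ k)
            + (Θ (bv A)) ^ (M+1) • xs (eA A w) B x (M+1) := by rw [hTr]; abel
  -- now show the difference is infinitely deep
  have hdeep : ∀ M, InD A E M (x - Psi Θ B Sg) := by
    intro M
    have hsplit : ∀ i, Sg i = (∑ k ∈ Finset.range M, C (cf B (xs (eA A w) B x k) i) * X ^ k)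
        + X ^ M * mk (fun n => coeff (n + M) (Sg i)) := by
      intro i
      have h := split_dec (Sg i) M
      have hcoeff : ∀ k ∈ Finset.range M, C (coeff k (Sg i)) * (X:PowerSeries ℂ) ^ k
          = C (cf B (xs (eA A w) B x k) i) * X ^ k := by
        intro k _
        rw [hSg]; simp [coeff_mk]
      rw [Finset.sum_congr rfl hcoeff] at h
      exact h
    have hPsiSg : Psi Θ B Sg
        = Psi Θ B (fun i => ∑ k ∈ Finset.range M, C (cf B (xs (eA A w) B x k) i) * X ^ k)
          + Psi Θ B (fun i => X ^ M * mk (fun n => coeff (n + M) (Sg i))) :=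
      (congrArg (Psi Θ B) (funext hsplit)).trans (Psi_add Θ B _ _)
    have harr : x - Psi Θ B Sg
        = (Θ (bv A)) ^ M • xs (eA A w) B x M
          - Psi Θ B (fun i => X ^ M * mk (fun n => coeff (n + M) (Sg i))) := by
      calc x - Psi Θ B Sg
          = ((Psi Θ B (fun i => ∑ k ∈ Finset.range M, C (cf B (xs (eA A w) B x k) i) * X ^ k))
              + (Θ (bv A)) ^ M • xs (eA A w) B x M)
            - ((Psi Θ B (fun i => ∑ k ∈ Finset.range M, C (cf B (xs (eA A w) B x k) i) * X ^ k))
              + Psi Θ B (fun i => X ^ M * mk (fun n => coeff (n + M) (Sg i)))) := by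
            rw [← claim M, ← hPsiSg]
        _ = (Θ (bv A)) ^ M • xs (eA A w) B x M
              - Psi Θ B (fun i => X ^ M * mk (fun n => coeff (n + M) (Sg i))) := by abel
    rw [harr]
    refine InD_sub (Tdeep hPS B hsp Θ θ hΘb M _) ?_
    unfold Psi
    refine InD_sum _ _ fun i _ => ?_
    have hloc : Θ (eB A (X ^ M * mk (fun n => coeff (n + M) (Sg i))))
        = (Θ (bv A))^M * Θ (eB A (mk (fun n => coeff (n + M) (Sg i)))) := by
      rw [map_mul, map_pow, eB_X, map_mul, map_pow]
    rw [hloc, mul_smul]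
    exact Tdeep hPS B hsp Θ θ hΘb M _
  exact (sub_eq_zero.mp (InD_sep hPS B hdeep)).symm
end SpanPart
theorem PS_zero_of_dvd {f : PowerSeries ℂ} (h : ∀ M, (X : PowerSeries ℂ) ^ M ∣ f) :
    f = 0 := by
  ext n
  have := (X_pow_dvd_iff).mp (h (n+1)) n (Nat.lt_succ_self n)
  simpa using this

section Assembly

variable {A : Type u} [Ring A] [Algebra ℂ A] [AHatAlgebra A]

theorem twisted_simple (θ : PowerSeries ℂ) (hθ0 : constantCoeff θ = 0)
    (hθ1 : coeff 1 θ ≠ 0)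
    (Θ : A ≃ₐ[ℂ] A) (hΘa : Θ (av A) = eA A θ)
    (hΘb : Θ (bv A) = bv A * eA A θ.derivativeFun)
    (E : Type v) [AddCommGroup E] [Module A E]
    (h : IsSimplePole A E) : IsSimplePole A (Twisted A Θ.toAlgHom.toRingHom E) := by
  obtain ⟨hff, hsp⟩ := h
  letI instPS : Module (PowerSeries ℂ) E := psMod A E
  haveI hfin : Module.Finite (PowerSeries ℂ) E := hff.1
  haveI hfree : Module.Free (PowerSeries ℂ) E := hff.2
  have hPS : ∀ (S : PowerSeries ℂ) (v : E), S • v = eB A S • v := fun _ _ => rfl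
  -- inverse of θ'
  have hcc : constantCoeff θ.derivativeFun = coeff 1 θ := by
    rw [← coeff_zero_eq_constantCoeff_apply, show derivativeFun θ = d⁄dX ℂ θ from rfl, coeff_derivativeFun]
    simp
  have huP : IsUnit θ.derivativeFun := by
    rw [PowerSeries.isUnit_iff_constantCoeff, hcc]
    exact isUnit_iff_ne_zero.mpr hθ1
  obtain ⟨uu, huu⟩ := huP
  have hw : θ.derivativeFun * ((uu⁻¹ : (PowerSeries ℂ)ˣ) : PowerSeries ℂ) = 1 := by
    rw [← huu, Units.mul_inv_eq_one]
  set w : PowerSeries ℂ := ((uu⁻¹ : (PowerSeries ℂ)ˣ) : PowerSeries ℂ)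
  -- basis
  set B : Module.Basis (Module.Free.ChooseBasisIndex (PowerSeries ℂ) E) (PowerSeries ℂ) E :=
    Module.Free.chooseBasis (PowerSeries ℂ) E with hB
  letI instTw : Module (PowerSeries ℂ) (Twisted A Θ.toAlgHom.toRingHom E) :=
    psMod A (Twisted A Θ.toAlgHom.toRingHom E)
  have key : ∀ g : Module.Free.ChooseBasisIndex (PowerSeries ℂ) E → PowerSeries ℂ,
      (∑ i, g i • (show Twisted A Θ.toAlgHom.toRingHom E from B i)) = Psi Θ B g := fun g => rfl
  have hindep : LinearIndependent (PowerSeries ℂ)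
      (fun i => (show Twisted A Θ.toAlgHom.toRingHom E from B i)) := by
    rw [Fintype.linearIndependent_iff]
    intro g hg
    have hg' : Psi Θ B g = 0 := by rw [← key g]; exact hg
    intro i
    refine PS_zero_of_dvd fun M => ?_
    refine strict hPS B hsp Θ θ hΘb w hw M g ?_ i
    rw [hg']
    exact InD_zero M
  have hspan : ⊤ ≤ Submodule.span (PowerSeries ℂ)
      (Set.range (fun i => (show Twisted A Θ.toAlgHom.toRingHom E from B i))) := by
    intro x _
    obtain ⟨σ, hσ⟩ := span_exists hPS B hsp Θ θ hΘb w hw x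
    rw [Submodule.mem_span_range_iff_exists_fun]
    exact ⟨σ, by rw [key σ]; exact hσ⟩
  let BTw : Module.Basis (Module.Free.ChooseBasisIndex (PowerSeries ℂ) E) (PowerSeries ℂ)
      (Twisted A Θ.toAlgHom.toRingHom E) := Module.Basis.mk hindep hspan
  constructor
  · exact ⟨Module.Finite.of_basis BTw, Module.Free.of_basis BTw⟩
  · intro x
    let xE : E := x
    obtain ⟨q, hq⟩ : (X : PowerSeries ℂ) ∣ θ := X_dvd_iff.mpr hθ0
    obtain ⟨y0, hy0⟩ := hsp (eA A q • xE)
    refine ⟨(eA A w • y0 : E), ?_⟩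
    have hgoal : Θ (av A) • xE = Θ (bv A) • (eA A w • y0 : E) := by
      rw [hΘa, hΘb]
      conv_lhs => rw [hq, map_mul, eA_X, mul_smul]
      rw [hy0, mul_smul, ← mul_smul (eA A θ.derivativeFun), ← map_mul, hw, map_one, one_smul]
    exact hgoal

theorem twisted_regular (θ : PowerSeries ℂ) (hθ0 : constantCoeff θ = 0)
    (hθ1 : coeff 1 θ ≠ 0)
    (Θ : A ≃ₐ[ℂ] A) (hΘa : Θ (av A) = eA A θ)
    (hΘb : Θ (bv A) = bv A * eA A θ.derivativeFun)
    (E : Type v) [AddCommGroup E] [Module A E]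
    (h : IsRegular A E) : IsRegular A (Twisted A Θ.toAlgHom.toRingHom E) := by
  obtain ⟨F, i, hF, hinj⟩ := h
  refine ⟨ModuleCat.of A (Twisted A Θ.toAlgHom.toRingHom F), ?_, ?_, ?_⟩
  · exact {
      toFun := fun v => i v
      map_add' := fun v v' => i.map_add v v'
      map_smul' := fun x v => i.map_smul (Θ.toAlgHom.toRingHom x) v }
  · exact twisted_simple θ hθ0 hθ1 Θ hΘa hΘb F hF
  · exact hinj

end Assembly
end S7aux

open AHat in
/-- If `E` is a simple pole (a,b)-module (resp. a regular (a,b)-module), then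
for any change of variable `θ`, so is `θ_*(E)`. -/
theorem statement7 (A : Type u) [Ring A] [Algebra ℂ A] [AHatAlgebra A]
    (θ : PowerSeries ℂ) (hθ0 : PowerSeries.constantCoeff θ = 0)
    (hθ1 : PowerSeries.coeff 1 θ ≠ 0)
    (Θ : A ≃ₐ[ℂ] A) (hΘa : Θ (av A) = eA A θ)
    (hΘb : Θ (bv A) = bv A * eA A θ.derivativeFun)
    (E : Type v) [AddCommGroup E] [Module A E] :
    (IsSimplePole A E → IsSimplePole A (Twisted A Θ.toAlgHom.toRingHom E)) ∧
    (IsRegular A E → IsRegular A (Twisted A Θ.toAlgHom.toRingHom E)) := by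
  constructor
  · exact S7aux.twisted_simple θ hθ0 hθ1 Θ hΘa hΘb E
  · exact S7aux.twisted_regular θ hθ0 hθ1 Θ hΘa hΘb E
end
end

section
/- Let E be a simple pole (a,b)-module of rank n over ℂ[[b]] admitting a ℂ[[b]]-basis e = (e₁, …, e_n) such that a·e ≡ b·(λ·Id_n + N)·e modulo b²·E, where λ ∈ ℂ and N is the principal nilpotent matrix with N(e_j) = e_{j+1} for j < n and N(e_n) = 0. Then there exists a ℂ[[b]]-basis ε = (ε₁, …, ε_n) of E such that a·ε = b·(λ·Id_n + N)·ε holds exactly. -/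
/- Axiomatized framework for Barlet's algebra `Â` and its (a,b)-modules. -/

open PowerSeries

noncomputable section

universe u v

section Statement11Aux

open AHat

variable {A : Type u} [Ring A] [Algebra ℂ A] [AHatAlgebra A]

lemma aux_ab : av A * bv A = bv A * av A + bv A ^ 2 := by
  have h := AHatAlgebra.comm_ab (A := A)
  rw [sub_eq_iff_eq_add, add_comm] at h
  exact h

lemma aux_ab_pow (k : ℕ) : av A * bv A ^ k = bv A ^ k * av A + k • bv A ^ (k+1) := by
  induction k with
  | zero => simp
  | succ k ih =>
    calc av A * bv A ^ (k+1) = (av A * bv A ^ k) * bv A := by rw [pow_succ, mul_assoc]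
      _ = bv A ^ k * (av A * bv A) + k • (bv A ^ (k+1) * bv A) := by
            rw [ih, add_mul, smul_mul_assoc, mul_assoc]
      _ = bv A ^ k * (bv A * av A) + bv A ^ k * bv A ^ 2 + k • bv A ^ (k+2) := by
            rw [aux_ab, mul_add, ← pow_succ]
      _ = bv A ^ (k+1) * av A + (k+1) • bv A ^ (k+2) := by
            rw [succ_nsmul, ← mul_assoc, ← pow_succ]
            have : bv A ^ k * bv A ^ 2 = bv A ^ (k+2) := by rw [← pow_add]
            rw [this]; abel

/-- `X^2 * derivative`. -/
def XXD : PowerSeries ℂ →ₗ[ℂ] PowerSeries ℂ where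
  toFun S := PowerSeries.mk fun m => ((m - 1 : ℕ) : ℂ) * PowerSeries.coeff (m - 1) S
  map_add' S T := by ext m; simp [mul_add]
  map_smul' c S := by ext m; simp; ring

lemma coeff_XXD (m : ℕ) (S : PowerSeries ℂ) :
    coeff m (XXD S) = ((m - 1 : ℕ) : ℂ) * coeff (m - 1) S := by simp [XXD]

lemma XXD_monomial (c : ℂ) (k : ℕ) :
    XXD (C c * X ^ k) = (k : PowerSeries ℂ) * (C c * X ^ (k+1)) := by
  ext m
  rw [coeff_XXD, ← map_natCast (C) k, ← mul_assoc, ← map_mul]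
  simp only [coeff_C_mul, coeff_X_pow]
  rcases m with _ | m
  · simp
  · simp only [Nat.add_sub_cancel]
    by_cases h : m = k
    · subst h; simp
    · simp [h, fun hh => h (Nat.succ_injective hh)]

lemma st11_decomp (S : PowerSeries ℂ) (N : ℕ) :
    ∃ T, S = (∑ k ∈ Finset.range N, C (coeff k S) * X ^ k) + X ^ N * T := by
  have h : (X : PowerSeries ℂ) ^ N ∣ S - ∑ k ∈ Finset.range N, C (coeff k S) * X ^ k := by
    rw [X_pow_dvd_iff]
    intro m hm
    rw [map_sub, map_sum]
    rw [Finset.sum_eq_single m (fun k _ hk => by simp [coeff_C_mul, coeff_X_pow, (Ne.symm hk)])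
      (fun hm' => absurd (Finset.mem_range.mpr hm) hm')]
    simp [coeff_C_mul, coeff_X_pow]
  obtain ⟨T, hT⟩ := h
  exact ⟨T, by rw [← hT]; ring⟩

lemma XXD_Xpow_mul (N : ℕ) (T : PowerSeries ℂ) :
    ∃ W, XXD (X ^ N * T) = X ^ N * W := by
  have h : (X : PowerSeries ℂ) ^ N ∣ XXD (X ^ N * T) := by
    rw [X_pow_dvd_iff]
    intro m hm
    rw [coeff_XXD]
    rcases m with _ | m
    · simp
    · rw [Nat.add_sub_cancel]
      have : coeff m (X ^ N * T) = 0 :=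
        X_pow_dvd_iff.mp (dvd_mul_right _ _) m (Nat.lt_of_succ_lt hm)
      simp [this]
  exact h

variable {E : Type v} [AddCommGroup E] [Module A E] [Module (PowerSeries ℂ) E]

lemma eB_X : eB A (X : PowerSeries ℂ) = bv A := AHatAlgebra.embB_X

lemma Xpow_smul (hcomp : ∀ (S : PowerSeries ℂ) (x : E), S • x = eB A S • x)
    (k : ℕ) (x : E) : (X ^ k : PowerSeries ℂ) • x = bv A ^ k • x := by
  rw [hcomp, map_pow, eB_X]

lemma C_smul (hcomp : ∀ (S : PowerSeries ℂ) (x : E), S • x = eB A S • x)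
    (c : ℂ) (x : E) : (C c : PowerSeries ℂ) • x = algebraMap ℂ A c • x := by
  rw [hcomp]
  congr 1
  have : (C c : PowerSeries ℂ) = algebraMap ℂ (PowerSeries ℂ) c := rfl
  rw [this, AlgHom.commutes]

lemma a_smul_Xpow (hcomp : ∀ (S : PowerSeries ℂ) (x : E), S • x = eB A S • x)
    (k : ℕ) (z : E) :
    av A • ((X ^ k : PowerSeries ℂ) • z) =
      (X ^ k : PowerSeries ℂ) • (av A • z) + ((k : PowerSeries ℂ) * X ^ (k+1)) • z := by
  rw [Xpow_smul hcomp, Xpow_smul hcomp, smul_smul, aux_ab_pow, add_smul, mul_smul]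
  congr 1
  rw [mul_smul, Nat.cast_smul_eq_nsmul, Xpow_smul hcomp, smul_assoc]

lemma a_smul_monomial (hcomp : ∀ (S : PowerSeries ℂ) (x : E), S • x = eB A S • x)
    (c : ℂ) (k : ℕ) (z : E) :
    av A • ((C c * X ^ k : PowerSeries ℂ) • z) =
      (C c * X ^ k : PowerSeries ℂ) • (av A • z) + XXD (C c * X ^ k) • z := by
  rw [XXD_monomial, mul_smul, C_smul hcomp, smul_smul, ← Algebra.commutes c (av A), ← smul_smul,
    a_smul_Xpow hcomp, smul_add]
  congr 1
  · rw [mul_smul, C_smul hcomp]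
  · rw [mul_smul, mul_smul, mul_smul, C_smul hcomp,
      Nat.cast_smul_eq_nsmul, Nat.cast_smul_eq_nsmul, smul_comm]


lemma st11_deriv_smul (hcomp : ∀ (S : PowerSeries ℂ) (x : E), S • x = eB A S • x)
    (hb : ∀ x : E, ∃ y : E, av A • x = bv A • y)
    {n : ℕ} (e : Module.Basis (Fin n) (PowerSeries ℂ) E) (S : PowerSeries ℂ) (x : E) :
    av A • (S • x) = S • (av A • x) + XXD S • x := by
  have key : ∀ N : ℕ, ∃ w : E,
      av A • (S • x) - S • (av A • x) - XXD S • x = (X ^ N : PowerSeries ℂ) • w := by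
    intro N
    obtain ⟨T, hT⟩ := st11_decomp S N
    set P : PowerSeries ℂ := ∑ k ∈ Finset.range N, C (coeff k S) * X ^ k with hP
    have hPx : av A • (P • x) = P • (av A • x) + XXD P • x := by
      rw [hP, Finset.sum_smul, Finset.smul_sum, map_sum, Finset.sum_smul, Finset.sum_smul,
        ← Finset.sum_add_distrib]
      exact Finset.sum_congr rfl fun k _ => a_smul_monomial hcomp _ _ x
    obtain ⟨y1, hy1⟩ := hb (T • x)
    obtain ⟨W, hW⟩ := XXD_Xpow_mul N T
    refine ⟨(X : PowerSeries ℂ) • y1 + ((N : PowerSeries ℂ) * X) • (T • x)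
      - T • (av A • x) - W • x, ?_⟩
    have h1 : S • x = P • x + ((X : PowerSeries ℂ) ^ N * T) • x := by rw [← add_smul, ← hT]
    have h2 : S • (av A • x) = P • (av A • x) + (X ^ N : PowerSeries ℂ) • (T • (av A • x)) := by
      rw [← mul_smul, ← add_smul, ← hT]
    have h3 : XXD S • x = XXD P • x + (X ^ N : PowerSeries ℂ) • (W • x) := by
      rw [hT, map_add, add_smul, hW, mul_smul]
    have h5 : av A • (T • x) = (X : PowerSeries ℂ) • y1 := by
      rw [hy1, ← pow_one (X : PowerSeries ℂ), Xpow_smul hcomp, pow_one]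
    have h4 : av A • (S • x) = av A • (P • x) + ((X ^ N : PowerSeries ℂ) • ((X : PowerSeries ℂ) • y1)
        + ((N : PowerSeries ℂ) * X ^ (N+1)) • (T • x)) := by
      rw [h1, smul_add, mul_smul, a_smul_Xpow hcomp, h5]
    have h6 : (X ^ N : PowerSeries ℂ) • (((N : PowerSeries ℂ) * X) • (T • x)) =
        ((N : PowerSeries ℂ) * X ^ (N+1)) • (T • x) := by
      rw [smul_smul]; congr 1; ring
    rw [h4, h2, h3, hPx, smul_sub, smul_sub, smul_add, h6]
    abel
  have hkey0 : av A • (S • x) - S • (av A • x) - XXD S • x = 0 := by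
    set Δ := av A • (S • x) - S • (av A • x) - XXD S • x with hΔ
    have hre : ∀ i, e.repr Δ i = 0 := by
      intro i
      apply PowerSeries.ext; intro m
      obtain ⟨w, hw⟩ := key (m+1)
      have h7 : e.repr Δ i = (X ^ (m+1) : PowerSeries ℂ) * e.repr w i := by
        rw [hw, map_smul, Finsupp.smul_apply, smul_eq_mul]
      rw [h7, map_zero]
      exact X_pow_dvd_iff.mp (dvd_mul_right _ _) m (lt_add_one m)
    have h8 : e.repr Δ = 0 := Finsupp.ext hre
    have := congrArg e.repr.symm h8
    rwa [e.repr.symm_apply_apply, map_zero] at this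
  have h9 : av A • (S • x) - (S • (av A • x) + XXD S • x) = 0 := by
    rw [sub_add_eq_sub_sub]; exact hkey0
  exact sub_eq_zero.mp h9

end Statement11Aux
section MatrixAux

variable {n : ℕ}

/-- Principal nilpotent matrix: `N e_j = e_{j+1}`. -/
def NmatSt (n : ℕ) : Matrix (Fin n) (Fin n) ℂ :=
  Matrix.of fun k j => if (k : ℕ) = (j : ℕ) + 1 then 1 else 0

/-- `T ↦ T * N - N * T`. -/
def DopSt (n : ℕ) : Matrix (Fin n) (Fin n) ℂ →ₗ[ℂ] Matrix (Fin n) (Fin n) ℂ :=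
  LinearMap.mulRight ℂ (NmatSt n) - LinearMap.mulLeft ℂ (NmatSt n)

lemma DopSt_apply (T : Matrix (Fin n) (Fin n) ℂ) :
    DopSt n T = T * NmatSt n - NmatSt n * T := rfl

lemma NmatSt_pow_apply (p : ℕ) (k j : Fin n) :
    ((NmatSt n) ^ p) k j = if (k : ℕ) = (j : ℕ) + p then 1 else 0 := by
  induction p generalizing j with
  | zero => simp [Matrix.one_apply, Fin.ext_iff]
  | succ p ih =>
    rw [pow_succ, Matrix.mul_apply]
    by_cases hj : (j : ℕ) + 1 < n
    · rw [Finset.sum_eq_single (⟨(j : ℕ) + 1, hj⟩ : Fin n)]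
      · rw [ih]
        have hcnd : ((k : ℕ) = (j : ℕ) + 1 + p) ↔ ((k : ℕ) = (j : ℕ) + (p + 1)) := by omega
        simp [NmatSt, hcnd]
      · intro i _ hi
        have : (i : ℕ) ≠ (j : ℕ) + 1 := fun h => hi (Fin.ext h)
        simp [NmatSt, this]
      · intro h; exact absurd (Finset.mem_univ _) h
    · have hz : ∀ i : Fin n, (NmatSt n) i j = 0 := by
        intro i
        have hi := i.isLt
        have : (i : ℕ) ≠ (j : ℕ) + 1 := by omega
        simp [NmatSt, this]
      have hk := k.isLt
      have : (k : ℕ) ≠ (j : ℕ) + (p + 1) := by omega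
      rw [if_neg this]
      exact Finset.sum_eq_zero fun i _ => by rw [hz i, mul_zero]

lemma NmatSt_pow_eq_zero {p : ℕ} (hp : n ≤ p) : (NmatSt n) ^ p = 0 := by
  ext k j
  rw [NmatSt_pow_apply]
  have hk := k.isLt
  have : (k : ℕ) ≠ (j : ℕ) + p := by omega
  simp [this]

lemma DopSt_isNilpotent (n : ℕ) : IsNilpotent (DopSt n) := by
  have hcomm : Commute (LinearMap.mulRight ℂ (NmatSt n)) (LinearMap.mulLeft ℂ (NmatSt n)) := by
    ext T
    simp only [Module.End.mul_apply, LinearMap.mulLeft_apply, LinearMap.mulRight_apply,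
      Matrix.mul_assoc]
  exact Commute.isNilpotent_sub hcomm
    ((LinearMap.isNilpotent_mulRight_iff ℂ _).mpr ⟨n, NmatSt_pow_eq_zero le_rfl⟩)
    ((LinearMap.isNilpotent_mulLeft_iff ℂ _).mpr ⟨n, NmatSt_pow_eq_zero le_rfl⟩)

/-- A nilpotency exponent for `DopSt n`. -/
def KSt (n : ℕ) : ℕ := (DopSt_isNilpotent n).choose

lemma DopSt_iter_KSt (R : Matrix (Fin n) (Fin n) ℂ) : (DopSt n)^[KSt n] R = 0 := by
  rw [← Module.End.pow_apply]
  show (DopSt n ^ (DopSt_isNilpotent n).choose) R = 0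
  rw [(DopSt_isNilpotent n).choose_spec, LinearMap.zero_apply]

/-- Recursive solution of `S N - N S - m S = Σ U_p S_q`. -/
def ScoefSt (U : ℕ → Matrix (Fin n) (Fin n) ℂ) : ℕ → Matrix (Fin n) (Fin n) ℂ
  | 0 => 1
  | (m+1) => - ∑ r ∈ Finset.range (KSt n), (((m+1 : ℕ) : ℂ))⁻¹ ^ (r+1) •
      (DopSt n)^[r] (∑ pq ∈ (Finset.HasAntidiagonal.antidiagonal m).attach,
        U pq.1.1 * ScoefSt U pq.1.2)
  decreasing_by
    have := Finset.HasAntidiagonal.mem_antidiagonal.mp pq.2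
    omega

lemma ScoefSt_eq (U : ℕ → Matrix (Fin n) (Fin n) ℂ) (m : ℕ) :
    ScoefSt U (m+1) * NmatSt n - NmatSt n * ScoefSt U (m+1)
      - (((m+1 : ℕ) : ℂ)) • ScoefSt U (m+1)
      = ∑ pq ∈ Finset.HasAntidiagonal.antidiagonal m, U pq.1 * ScoefSt U pq.2 := by
  set R : Matrix (Fin n) (Fin n) ℂ := ∑ pq ∈ Finset.HasAntidiagonal.antidiagonal m, U pq.1 * ScoefSt U pq.2
    with hR
  set c : ℂ := (((m+1 : ℕ) : ℂ))⁻¹ with hc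
  have hmc : ((m+1 : ℕ) : ℂ) * c = 1 := by
    have hnz : ((m+1 : ℕ) : ℂ) ≠ 0 := Nat.cast_ne_zero.mpr (Nat.succ_ne_zero m)
    rw [hc, mul_inv_cancel₀ hnz]
  have hS : ScoefSt U (m+1) = - ∑ r ∈ Finset.range (KSt n), c ^ (r+1) •
      (DopSt n)^[r] R := by
    rw [ScoefSt, hR]
    congr 2
    ext r
    congr 1
    rw [← Finset.sum_attach (Finset.HasAntidiagonal.antidiagonal m) (fun pq => U pq.1 * ScoefSt U pq.2)]
  have key : DopSt n (ScoefSt U (m+1)) - ((m+1 : ℕ) : ℂ) • ScoefSt U (m+1) = R := by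
    rw [hS, map_neg, map_sum, smul_neg, sub_neg_eq_add, neg_add_eq_sub]
    have h1 : ∀ r, DopSt n (c ^ (r+1) • (DopSt n)^[r] R) = c ^ (r+1) • (DopSt n)^[r+1] R := by
      intro r
      rw [map_smul, ← Function.iterate_succ_apply' (DopSt n)]
    have h2 : ((m+1 : ℕ) : ℂ) • ∑ r ∈ Finset.range (KSt n), c ^ (r+1) • (DopSt n)^[r] R
        = ∑ r ∈ Finset.range (KSt n), c ^ r • (DopSt n)^[r] R := by
      rw [Finset.smul_sum]
      refine Finset.sum_congr rfl fun r _ => ?_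
      rw [smul_smul, pow_succ', ← mul_assoc, hmc, one_mul]
    rw [Finset.sum_congr rfl fun r _ => h1 r, h2]
    rcases hK : KSt n with _ | K
    · have hR0 : R = 0 := by
        have h0 := DopSt_iter_KSt (n := n) R
        rwa [hK, Function.iterate_zero_apply] at h0
      simp [hR0]
    · rw [Finset.sum_range_succ' (fun r => c ^ r • (DopSt n)^[r] R) K,
        Finset.sum_range_succ (fun r => c ^ (r+1) • (DopSt n)^[r+1] R) K]
      have hKz : (DopSt n)^[K + 1] R = 0 := by
        rw [← hK]; exact DopSt_iter_KSt R
      rw [hKz, smul_zero]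
      simp only [pow_zero, one_smul, Function.iterate_zero_apply]
      abel
  rw [← key, DopSt_apply]

end MatrixAux



open AHat in
/-- If a simple pole (a,b)-module `E` of rank `n` over `ℂ[[b]]` admits a
`ℂ[[b]]`-basis `e` with `a·e ≡ b·(λ·Id + N)·e` modulo `b²·E` (where
`N e_j = e_{j+1}`, `N e_n = 0`), then it admits a `ℂ[[b]]`-basis `ε` with
`a·ε = b·(λ·Id + N)·ε` exactly. -/
theorem statement11 (A : Type u) [Ring A] [Algebra ℂ A] [AHatAlgebra A]
    (E : Type v) [AddCommGroup E] [Module A E]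
    [Module (PowerSeries ℂ) E]
    (hcomp : ∀ (S : PowerSeries ℂ) (x : E), S • x = eB A S • x)
    (hE : IsSimplePole A E)
    (n : ℕ) (hn : Module.finrank (PowerSeries ℂ) E = n)
    (l : ℂ) (e : Module.Basis (Fin n) (PowerSeries ℂ) E)
    (he : ∀ j : Fin n, ∃ y : E,
      av A • e j - ((algebraMap ℂ A l * bv A) • e j +
        (if h : (j : ℕ) + 1 < n then bv A • e (⟨(j : ℕ) + 1, h⟩ : Fin n) else 0)) =
        (bv A ^ 2) • y) :
    ∃ ε : Module.Basis (Fin n) (PowerSeries ℂ) E, ∀ j : Fin n,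
      av A • ε j = (algebraMap ℂ A l * bv A) • ε j +
        (if h : (j : ℕ) + 1 < n then bv A • ε (⟨(j : ℕ) + 1, h⟩ : Fin n) else 0) := by
  classical
  have hb : ∀ x : E, ∃ y : E, av A • x = bv A • y := hE.2
  choose y hy using he
  -- scalar translation lemmas
  have hbz : ∀ z : E, bv A • z = (X : PowerSeries ℂ) • z := by
    intro z; rw [← pow_one (X : PowerSeries ℂ), Xpow_smul hcomp, pow_one]
  have hb2 : ∀ z : E, (bv A ^ 2) • z = ((X : PowerSeries ℂ) ^ 2) • z :=
    fun z => (Xpow_smul hcomp 2 z).symm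
  have hlb : ∀ z : E, (algebraMap ℂ A l * bv A) • z = ((C l * X : PowerSeries ℂ)) • z := by
    intro z
    rw [mul_smul, mul_smul, C_smul hcomp, ← hbz]
  -- the matrices
  set V : Matrix (Fin n) (Fin n) (PowerSeries ℂ) := Matrix.of fun k i => e.repr (y i) k with hV
  set Uc : ℕ → Matrix (Fin n) (Fin n) ℂ :=
    fun p => Matrix.of fun k i => coeff p (V k i) with hUc
  set Sc : ℕ → Matrix (Fin n) (Fin n) ℂ := ScoefSt Uc with hSc
  set SS : Matrix (Fin n) (Fin n) (PowerSeries ℂ) :=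
    Matrix.of fun k j => PowerSeries.mk fun m => Sc m k j with hSS
  have hSSc : ∀ (m : ℕ) (k j : Fin n), coeff m (SS k j) = Sc m k j := by
    intro m k j; rw [hSS]; simp [Matrix.of_apply]
  have hSc0 : Sc 0 = 1 := by rw [hSc, ScoefSt]
  -- determinant is a unit
  have hdet : IsUnit SS.det := by
    rw [PowerSeries.isUnit_iff_constantCoeff]
    have h0 : (PowerSeries.constantCoeff) SS.det
        = (SS.map (PowerSeries.constantCoeff)).det := RingHom.map_det _ _
    have h1 : SS.map (PowerSeries.constantCoeff) = 1 := by
      ext k j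
      rw [Matrix.map_apply, ← coeff_zero_eq_constantCoeff_apply, hSSc, hSc0]
    rw [h0, h1, Matrix.det_one]
    exact isUnit_one
  refine ⟨e.map (Matrix.toLinearEquiv e SS hdet), ?_⟩
  have hεdef : ∀ j : Fin n, (e.map (Matrix.toLinearEquiv e SS hdet)) j = ∑ i, SS i j • e i := by
    intro j
    rw [Module.Basis.map_apply, Matrix.toLinearEquiv_apply, Matrix.toLin_self]
  intro j
  -- repr of a combination
  have hrs : ∀ (c : Fin n → PowerSeries ℂ) (k : Fin n), e.repr (∑ i, c i • e i) k = c k := by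
    intro c k
    rw [map_sum, Finset.sum_apply']
    rw [Finset.sum_eq_single k (fun i _ hi => by
      rw [map_smul, Finsupp.smul_apply, Module.Basis.repr_self, Finsupp.single_apply, if_neg hi,
        smul_zero]) (fun h => absurd (Finset.mem_univ _) h)]
    rw [map_smul, Finsupp.smul_apply, Module.Basis.repr_self, Finsupp.single_apply, if_pos rfl,
      smul_eq_mul, mul_one]
  -- the relation satisfied by the original basis, in power series form
  have haei : ∀ i : Fin n, av A • e i = (C l * X : PowerSeries ℂ) • e i +
      (if h : (i : ℕ) + 1 < n then (X : PowerSeries ℂ) • e ⟨(i : ℕ) + 1, h⟩ else 0) +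
      ((X : PowerSeries ℂ) ^ 2) • y i := by
    intro i
    have h := hy i
    rw [sub_eq_iff_eq_add] at h
    rw [h, hb2 (y i), hlb (e i)]
    have hdite : (if h : (i : ℕ) + 1 < n then bv A • e ⟨(i : ℕ) + 1, h⟩ else 0)
        = (if h : (i : ℕ) + 1 < n then (X : PowerSeries ℂ) • e ⟨(i : ℕ) + 1, h⟩ else 0) := by
      by_cases h' : (i : ℕ) + 1 < n
      · rw [dif_pos h', dif_pos h', hbz]
      · rw [dif_neg h', dif_neg h']
    rw [hdite]
    abel
  -- repr of the shift term
  have hTik : ∀ i k : Fin n,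
      e.repr (if h : (i : ℕ) + 1 < n then (X : PowerSeries ℂ) • e ⟨(i : ℕ) + 1, h⟩ else 0) k
        = X * C (NmatSt n k i) := by
    intro i k
    by_cases h' : (i : ℕ) + 1 < n
    · rw [dif_pos h', map_smul, Finsupp.smul_apply, Module.Basis.repr_self, Finsupp.single_apply,
        smul_eq_mul]
      congr 1
      by_cases hk : (⟨(i : ℕ) + 1, h'⟩ : Fin n) = k
      · rw [if_pos hk]
        have : NmatSt n k i = 1 := by
          rw [← hk]; simp [NmatSt]
        rw [this, map_one]
      · rw [if_neg hk]
        have h2 : (k : ℕ) ≠ (i : ℕ) + 1 := fun hh => hk (Fin.ext hh.symm)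
        have : NmatSt n k i = 0 := by simp [NmatSt, h2]
        rw [this, map_zero]
    · rw [dif_neg h', map_zero, Finsupp.zero_apply]
      have hk := k.isLt
      have h2 : (k : ℕ) ≠ (i : ℕ) + 1 := by omega
      have : NmatSt n k i = 0 := by simp [NmatSt, h2]
      rw [this, map_zero, mul_zero]
  -- repr of the left-hand side
  have r1 : ∀ k, e.repr (av A • (e.map (Matrix.toLinearEquiv e SS hdet)) j) k =
      (C l * X) * SS k j + X * (∑ i, C (NmatSt n k i) * SS i j)
        + X * (X * (∑ i, V k i * SS i j)) + XXD (SS k j) := by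
    intro k
    have expand : av A • (e.map (Matrix.toLinearEquiv e SS hdet)) j
        = (∑ i, ((C l * X) * SS i j) • e i)
          + (∑ i, SS i j •
              (if h : (i : ℕ) + 1 < n then (X : PowerSeries ℂ) • e ⟨(i : ℕ) + 1, h⟩ else 0))
          + (∑ i, (((X : PowerSeries ℂ) ^ 2) * SS i j) • y i)
          + (∑ i, XXD (SS i j) • e i) := by
      rw [hεdef j, Finset.smul_sum]
      rw [Finset.sum_congr rfl (fun i _ => st11_deriv_smul hcomp hb e (SS i j) (e i))]
      rw [Finset.sum_add_distrib]
      congr 1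
      rw [Finset.sum_congr rfl (fun i _ => by
        rw [haei i, smul_add, smul_add, smul_smul, mul_comm (SS i j) (C l * X), smul_smul,
          mul_comm (SS i j) ((X : PowerSeries ℂ) ^ 2)])]
      rw [Finset.sum_add_distrib, Finset.sum_add_distrib]
    have p1 : e.repr (∑ i, ((C l * X) * SS i j) • e i) k = (C l * X) * SS k j := hrs _ k
    have p4 : e.repr (∑ i, XXD (SS i j) • e i) k = XXD (SS k j) := hrs _ k
    have p2 : e.repr (∑ i, SS i j •
        (if h : (i : ℕ) + 1 < n then (X : PowerSeries ℂ) • e ⟨(i : ℕ) + 1, h⟩ else 0)) k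
        = X * (∑ i, C (NmatSt n k i) * SS i j) := by
      rw [map_sum, Finset.sum_apply']
      rw [Finset.sum_congr rfl (fun i _ => by
        rw [map_smul, Finsupp.smul_apply, hTik i k, smul_eq_mul])]
      rw [Finset.mul_sum]
      exact Finset.sum_congr rfl fun i _ => by ring
    have p3 : e.repr (∑ i, (((X : PowerSeries ℂ) ^ 2) * SS i j) • y i) k
        = X * (X * (∑ i, V k i * SS i j)) := by
      rw [map_sum, Finset.sum_apply']
      rw [Finset.sum_congr rfl (fun i _ => by
        rw [map_smul, Finsupp.smul_apply, smul_eq_mul])]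
      have hterm : ∀ i, ((X : PowerSeries ℂ) ^ 2 * SS i j) * e.repr (y i) k
          = X * (X * (V k i * SS i j)) := by
        intro i
        have : e.repr (y i) k = V k i := rfl
        rw [this]; ring
      rw [Finset.sum_congr rfl fun i _ => hterm i, ← Finset.mul_sum, ← Finset.mul_sum]
    rw [expand, map_add, map_add, map_add, Finsupp.add_apply, Finsupp.add_apply,
      Finsupp.add_apply, p1, p2, p3, p4]
  -- repr of the right-hand side
  have r2 : ∀ k, e.repr ((algebraMap ℂ A l * bv A) • (e.map (Matrix.toLinearEquiv e SS hdet)) j +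
      (if h : (j : ℕ) + 1 < n then
        bv A • (e.map (Matrix.toLinearEquiv e SS hdet)) ⟨(j : ℕ) + 1, h⟩ else 0)) k =
      (C l * X) * SS k j +
        (if h : (j : ℕ) + 1 < n then X * SS k ⟨(j : ℕ) + 1, h⟩ else 0) := by
    intro k
    rw [map_add, Finsupp.add_apply]
    have q1 : e.repr ((algebraMap ℂ A l * bv A) • (e.map (Matrix.toLinearEquiv e SS hdet)) j) k
        = (C l * X) * SS k j := by
      rw [hlb, hεdef j, Finset.smul_sum]
      rw [Finset.sum_congr rfl (fun i _ => by rw [smul_smul])]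
      exact hrs _ k
    have q2 : e.repr (if h : (j : ℕ) + 1 < n then
        bv A • (e.map (Matrix.toLinearEquiv e SS hdet)) ⟨(j : ℕ) + 1, h⟩ else 0) k
        = (if h : (j : ℕ) + 1 < n then X * SS k ⟨(j : ℕ) + 1, h⟩ else 0) := by
      by_cases h' : (j : ℕ) + 1 < n
      · rw [dif_pos h', dif_pos h', hbz, hεdef, Finset.smul_sum]
        rw [Finset.sum_congr rfl (fun i _ => by rw [smul_smul])]
        exact hrs _ k
      · rw [dif_neg h', dif_neg h', map_zero, Finsupp.zero_apply]
    rw [q1, q2]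
  -- the key power series identity
  have key : ∀ k, X * (∑ i, C (NmatSt n k i) * SS i j) + X * (X * (∑ i, V k i * SS i j))
      + XXD (SS k j) = (if h : (j : ℕ) + 1 < n then X * SS k ⟨(j : ℕ) + 1, h⟩ else 0) := by
    intro k
    ext m
    rcases m with _ | m
    · rw [map_add, map_add, coeff_zero_X_mul, coeff_zero_X_mul, coeff_XXD]
      have hz : ((0 - 1 : ℕ) : ℂ) = 0 := by norm_num
      rw [hz, zero_mul]
      by_cases h' : (j : ℕ) + 1 < n
      · rw [dif_pos h', coeff_zero_X_mul]; ring
      · rw [dif_neg h', map_zero]; ring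
    · rw [map_add, map_add, coeff_succ_X_mul, coeff_succ_X_mul, coeff_XXD]
      have t1 : coeff m (∑ i, C (NmatSt n k i) * SS i j) = (NmatSt n * Sc m) k j := by
        rw [map_sum, Matrix.mul_apply]
        exact Finset.sum_congr rfl fun i _ => by rw [coeff_C_mul, hSSc]
      have t3 : ((m + 1 - 1 : ℕ) : ℂ) * coeff (m + 1 - 1) (SS k j) = (m : ℂ) * Sc m k j := by
        rw [Nat.add_sub_cancel, hSSc]
      have t4 : coeff (m + 1) (if h : (j : ℕ) + 1 < n then X * SS k ⟨(j : ℕ) + 1, h⟩ else 0)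
          = (Sc m * NmatSt n) k j := by
        rw [Matrix.mul_apply]
        by_cases h' : (j : ℕ) + 1 < n
        · rw [dif_pos h', coeff_succ_X_mul, hSSc]
          symm
          rw [Finset.sum_eq_single (⟨(j : ℕ) + 1, h'⟩ : Fin n)]
          · have : NmatSt n (⟨(j : ℕ) + 1, h'⟩ : Fin n) j = 1 := by simp [NmatSt]
            rw [this, mul_one]
          · intro i _ hi
            have h2 : (i : ℕ) ≠ (j : ℕ) + 1 := fun hh => hi (Fin.ext hh)
            have : NmatSt n i j = 0 := by simp [NmatSt, h2]
            rw [this, mul_zero]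
          · intro h; exact absurd (Finset.mem_univ _) h
        · rw [dif_neg h', map_zero]
          symm
          refine Finset.sum_eq_zero fun i _ => ?_
          have hi := i.isLt
          have h2 : (i : ℕ) ≠ (j : ℕ) + 1 := by omega
          have : NmatSt n i j = 0 := by simp [NmatSt, h2]
          rw [this, mul_zero]
      rw [t1, t3, t4]
      rcases m with _ | m'
      · rw [coeff_zero_X_mul, hSc0, Matrix.one_mul, Matrix.mul_one]
        norm_num
      · rw [coeff_succ_X_mul]
        have t2 : coeff m' (∑ i, V k i * SS i j)
            = (∑ pq ∈ Finset.HasAntidiagonal.antidiagonal m', Uc pq.1 * Sc pq.2) k j := by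
          rw [map_sum]
          rw [Finset.sum_congr rfl (fun i _ => coeff_mul m' (V k i) (SS i j))]
          rw [show (∑ i : Fin n, ∑ pq ∈ Finset.HasAntidiagonal.antidiagonal m',
              coeff pq.1 (V k i) * coeff pq.2 (SS i j))
            = ∑ pq ∈ Finset.HasAntidiagonal.antidiagonal m', ∑ i : Fin n,
              coeff pq.1 (V k i) * coeff pq.2 (SS i j) from Finset.sum_comm]
          rw [Matrix.sum_apply]
          refine Finset.sum_congr rfl fun pq _ => ?_
          rw [Matrix.mul_apply]
          refine Finset.sum_congr rfl fun i _ => ?_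
          rw [hSSc]
          congr 1
        rw [t2]
        have hmain := ScoefSt_eq Uc m'
        rw [← hSc] at hmain
        have hent := congrFun (congrFun hmain k) j
        rw [Matrix.sub_apply, Matrix.sub_apply, Matrix.smul_apply, smul_eq_mul] at hent
        push_cast at hent ⊢
        linear_combination -hent
  apply e.repr.injective
  apply Finsupp.ext
  intro k
  rw [r1 k, r2 k, ← key k]
  ring
end
end
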